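/- arXiv:2309.02062 — 6 statements merged into one kernel-verified Lean document; each statement's English description precedes it below -/
import Mathlib

section
/- A graph G = (V,E) is the complement of an interval graph if and only if there exists an ordering v_1, ..., v_n of V such that, orienting every edge from its endpoint of smaller index to its endpoint of larger index, the out-neighborhoods are nested: if i > j then N^+(v_i) ⊆ N^+(v_j). -/
open SimpleGraph

/-- `G` is an interval graph: the intersection graph of a family of closed intervals. -/
def IsIntervalGraph {V : Type*} (G : SimpleGraph V) : Prop :=
  ∃ lo hi : V → ℝ, (∀ v, lo v ≤ hi v) ∧ ∀ u v : V, u ≠ v →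
    (G.Adj u v ↔ (Set.Icc (lo u) (hi u) ∩ Set.Icc (lo v) (hi v)).Nonempty)

/-- `G` is the intersection graph of axis-parallel boxes in `ℝ^d`. -/
def HasBoxRep {V : Type*} (G : SimpleGraph V) (d : ℕ) : Prop :=
  ∃ lo hi : V → Fin d → ℝ, (∀ v i, lo v i ≤ hi v i) ∧
    ∀ u v : V, u ≠ v →
      (G.Adj u v ↔ ∀ i, (Set.Icc (lo u i) (hi u i) ∩ Set.Icc (lo v i) (hi v i)).Nonempty)

/-- The boxicity of a graph. -/
noncomputable def boxicity {V : Type*} (G : SimpleGraph V) : ℕ := sInf {d | HasBoxRep G d}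

/-- The Kneser graph `KG(n,2)`. -/
def kneser2 (n : ℕ) : SimpleGraph {s : Finset (Fin n) // s.card = 2} where
  Adj a b := Disjoint a.1 b.1
  symm := ⟨fun a b h => h.symm⟩
  loopless := ⟨fun a h => by
    have h2 := a.2
    simp only [disjoint_self, Finset.bot_eq_empty] at h
    rw [h] at h2
    simp at h2⟩

/-- The out-neighborhood of `σ i` for a linear ordering `σ` of the vertices. -/
def Nplus {V : Type*} (G : SimpleGraph V) {n : ℕ} (σ : Fin n ≃ V) (i : Fin n) : Set V :=
  {v | ∃ m : Fin n, i < m ∧ v = σ m ∧ G.Adj (σ i) (σ m)}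

/-- `Vset G σ i` is the set `V_i` from the prefix-intersection construction:
common neighbors of `σ 0, …, σ i`. -/
def Vset {V : Type*} (G : SimpleGraph V) {n : ℕ} (σ : Fin n ≃ V) (i : Fin n) : Set V :=
  {w | ∀ j : Fin n, j ≤ i → G.Adj (σ j) w}

/-- The graph `G^σ` from the prefix-intersection construction. -/
def Gsigma {V : Type*} (G : SimpleGraph V) {n : ℕ} (σ : Fin n ≃ V) : SimpleGraph V :=
  SimpleGraph.fromRel (fun u v => ∃ i : Fin n, u = σ i ∧ v ∈ Vset G σ i)

/-- A downward-closed finset of `Fin n` is an initial segment. -/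
lemma mem_iff_lt_card_aux {n : ℕ} (S : Finset (Fin n))
    (hdc : ∀ i ∈ S, ∀ j : Fin n, j < i → j ∈ S) (i : Fin n) :
    i ∈ S ↔ (i : ℕ) < S.card := by
  rcases S.eq_empty_or_nonempty with h | h
  · subst h; simp
  · set M := S.max' h with hM
    have hSM : S = Finset.Iic M := by
      ext j
      simp only [Finset.mem_Iic]
      constructor
      · exact fun hj => S.le_max' j hj
      · intro hj
        rcases eq_or_lt_of_le hj with rfl | hj
        · exact S.max'_mem h
        · exact hdc M (S.max'_mem h) j hj
    rw [hSM, Finset.mem_Iic, Fin.card_Iic, Fin.le_def]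
    omega


/-- `G` is the complement of an interval graph iff it has a nested-out-neighborhood ordering. -/
theorem compl_interval_iff_nested_ordering {V : Type*} [Fintype V] (G : SimpleGraph V) :
    IsIntervalGraph Gᶜ ↔ ∃ σ : Fin (Fintype.card V) ≃ V,
      ∀ i j : Fin (Fintype.card V), j < i → Nplus G σ i ⊆ Nplus G σ j := by
  classical
  set n := Fintype.card V with hn
  constructor
  · rintro ⟨lo, hi, hlohi, hrep⟩
    let f : Fin n → ℝ := fun i => -lo ((Fintype.equivFin V).symm i)
    refine ⟨(Tuple.sort f).trans (Fintype.equivFin V).symm, ?_⟩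
    set σ : Fin n ≃ V := (Tuple.sort f).trans (Fintype.equivFin V).symm with hσdef
    have hmono : ∀ j i : Fin n, j ≤ i → lo (σ i) ≤ lo (σ j) := by
      intro j i hji
      have h := Tuple.monotone_sort f hji
      simp only [Function.comp_apply, f] at h
      have e1 : σ j = (Fintype.equivFin V).symm (Tuple.sort f j) := rfl
      have e2 : σ i = (Fintype.equivFin V).symm (Tuple.sort f i) := rfl
      rw [e1, e2]; linarith
    intro i j hji v hv
    obtain ⟨m, him, rfl, hadj⟩ := hv
    have hne : σ i ≠ σ m := hadj.ne
    have h1 : ¬ (Set.Icc (lo (σ i)) (hi (σ i)) ∩ Set.Icc (lo (σ m)) (hi (σ m))).Nonempty := by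
      intro hint
      have h2 := (hrep _ _ hne).mpr hint
      rw [compl_adj] at h2
      exact h2.2 hadj
    have hdisj : hi (σ m) < lo (σ i) := by
      by_contra hle
      push_neg at hle
      apply h1
      rw [Set.Icc_inter_Icc, Set.nonempty_Icc]
      have hmi : lo (σ m) ≤ lo (σ i) := hmono i m him.le
      rw [max_le_iff, le_min_iff, le_min_iff]
      exact ⟨⟨hlohi _, hle⟩, ⟨hmi.trans (hlohi _), hlohi _⟩⟩
    have hjm : j < m := hji.trans him
    have hnejm : σ j ≠ σ m := fun h => hjm.ne (σ.injective h)
    have hadj2 : G.Adj (σ j) (σ m) := by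
      by_contra hna
      have hca : Gᶜ.Adj (σ j) (σ m) := (compl_adj G (σ j) (σ m)).mpr ⟨hnejm, hna⟩
      have hint := (hrep _ _ hnejm).mp hca
      rw [Set.Icc_inter_Icc, Set.nonempty_Icc] at hint
      have hlj : lo (σ i) ≤ lo (σ j) := hmono j i hji.le
      have h3 := le_max_left (lo (σ j)) (lo (σ m))
      have h4 := min_le_right (hi (σ j)) (hi (σ m))
      linarith
    exact ⟨m, hjm, rfl, hadj2⟩
  · rintro ⟨σ, hnest⟩
    set S : Fin n → Finset (Fin n) :=
      fun m => Finset.univ.filter (fun i => i < m ∧ G.Adj (σ i) (σ m)) with hS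
    have hdc : ∀ m : Fin n, ∀ i ∈ S m, ∀ j : Fin n, j < i → j ∈ S m := by
      intro m i hi j hj
      simp only [hS, Finset.mem_filter, Finset.mem_univ, true_and] at hi ⊢
      obtain ⟨him, hadj⟩ := hi
      have hmem : σ m ∈ Nplus G σ i := ⟨m, him, rfl, hadj⟩
      obtain ⟨m', hjm', heq, hadj'⟩ := hnest i j hj hmem
      have hm : m' = m := σ.injective heq.symm
      subst hm
      exact ⟨hj.trans him, hadj'⟩
    have hkey : ∀ i m : Fin n, i < m → (G.Adj (σ i) (σ m) ↔ (i:ℕ) < (S m).card) := by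
      intro i m him
      rw [← mem_iff_lt_card_aux (S m) (hdc m) i]
      simp [hS, him]
    have hcle : ∀ m : Fin n, (S m).card ≤ (m:ℕ) := by
      intro m
      calc (S m).card ≤ (Finset.Iio m).card := Finset.card_le_card (by
            intro x hx
            simp only [hS, Finset.mem_filter, Finset.mem_univ, true_and] at hx
            exact Finset.mem_Iio.mpr hx.1)
        _ = (m:ℕ) := Fin.card_Iio m
    refine ⟨fun v => -(((σ.symm v : Fin n) : ℕ) : ℝ),
           fun v => -(((S (σ.symm v)).card : ℕ) : ℝ) + 1/2, ?_, ?_⟩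
    · intro v
      have h1 : ((S (σ.symm v)).card : ℝ) ≤ (((σ.symm v : Fin n) : ℕ) : ℝ) :=
        Nat.cast_le.mpr (hcle _)
      simp only
      linarith
    · intro u v huv
      have main : ∀ i m : Fin n, i < m →
          (Gᶜ.Adj (σ i) (σ m) ↔
            (Set.Icc (-(((i : Fin n):ℕ):ℝ)) (-(((S i).card:ℕ):ℝ) + 1/2) ∩
             Set.Icc (-(((m : Fin n):ℕ):ℝ)) (-(((S m).card:ℕ):ℝ) + 1/2)).Nonempty) := by
        intro i m him
        rw [Set.Icc_inter_Icc, Set.nonempty_Icc, compl_adj]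
        have hne : σ i ≠ σ m := fun h => him.ne (σ.injective h)
        have h1 : ((S i).card : ℝ) ≤ ((i:ℕ):ℝ) := Nat.cast_le.mpr (hcle i)
        have h2 : ((S m).card : ℝ) ≤ ((m:ℕ):ℝ) := Nat.cast_le.mpr (hcle m)
        have him' : ((i:ℕ):ℝ) < ((m:ℕ):ℝ) := by exact_mod_cast him
        constructor
        · rintro ⟨-, hna⟩
          rw [hkey i m him] at hna
          have hcm : (S m).card ≤ (i:ℕ) := not_lt.mp hna
          have hcm' : ((S m).card : ℝ) ≤ ((i:ℕ):ℝ) := Nat.cast_le.mpr hcm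
          rw [max_le_iff, le_min_iff, le_min_iff]
          refine ⟨⟨by linarith, by linarith⟩, ⟨by linarith, by linarith⟩⟩
        · intro h
          refine ⟨hne, ?_⟩
          rw [hkey i m him]
          intro hlt
          have ha := le_trans (le_trans (le_max_left _ _) h) (min_le_right _ _)
          have hb : ((S m).card : ℝ) < ((i:ℕ):ℝ) + 1 := by linarith
          have hc : (S m).card < (i:ℕ) + 1 := by exact_mod_cast hb
          omega
      rcases lt_trichotomy (σ.symm u) (σ.symm v) with h | h | h
      · have hmn := main (σ.symm u) (σ.symm v) h
        simp only [Equiv.apply_symm_apply] at hmn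
        exact hmn
      · exact absurd (σ.symm.injective h) huv
      · have hmn := main (σ.symm v) (σ.symm u) h
        simp only [Equiv.apply_symm_apply] at hmn
        rw [SimpleGraph.adj_comm, Set.inter_comm]
        exact hmn
end

section
/- For any graph G = (V,E) and any linear ordering σ of V, the graph G^σ = (V, E^σ), where E^σ is defined by the prefix-intersection construction (V_0 := V, V_i := V_{i-1} ∩ N_G(v_i), and E^σ is the union over i of the edges from v_i to V_i), is an interval-order subgraph of G, i.e., its complement is an interval graph. -/
open SimpleGraph

/-- The first index `j` with `σ j` not adjacent to `σ a` (always `≤ a`). -/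
noncomputable def fnon {V : Type*} [DecidableEq V] (G : SimpleGraph V) [DecidableRel G.Adj]
    {n : ℕ} (σ : Fin n ≃ V) (a : Fin n) : Fin n :=
  (Finset.univ.filter (fun j => ¬ G.Adj (σ j) (σ a))).min'
    ⟨a, Finset.mem_filter.mpr ⟨Finset.mem_univ a, by simp⟩⟩

lemma fnon_le {V : Type*} [DecidableEq V] (G : SimpleGraph V) [DecidableRel G.Adj]
    {n : ℕ} (σ : Fin n ≃ V) (a : Fin n) : fnon G σ a ≤ a :=
  Finset.min'_le _ _ (Finset.mem_filter.mpr ⟨Finset.mem_univ a, by simp⟩)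

lemma not_adj_fnon {V : Type*} [DecidableEq V] (G : SimpleGraph V) [DecidableRel G.Adj]
    {n : ℕ} (σ : Fin n ≃ V) (a : Fin n) : ¬ G.Adj (σ (fnon G σ a)) (σ a) := by
  have := Finset.min'_mem (Finset.univ.filter (fun j => ¬ G.Adj (σ j) (σ a)))
    ⟨a, Finset.mem_filter.mpr ⟨Finset.mem_univ a, by simp⟩⟩
  exact (Finset.mem_filter.mp this).2

lemma adj_of_lt_fnon {V : Type*} [DecidableEq V] (G : SimpleGraph V) [DecidableRel G.Adj]
    {n : ℕ} (σ : Fin n ≃ V) {a j : Fin n} (h : j < fnon G σ a) : G.Adj (σ j) (σ a) := by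
  by_contra hna
  exact absurd (Finset.min'_le _ _ (Finset.mem_filter.mpr ⟨Finset.mem_univ j, hna⟩))
    (not_le.mpr h)

lemma mem_Vset_iff {V : Type*} [DecidableEq V] (G : SimpleGraph V) [DecidableRel G.Adj]
    {n : ℕ} (σ : Fin n ≃ V) (i b : Fin n) :
    σ b ∈ Vset G σ i ↔ i < fnon G σ b := by
  constructor
  · intro h
    by_contra hle
    exact not_adj_fnon G σ b (h _ (not_lt.mp hle))
  · intro h j hj
    exact adj_of_lt_fnon G σ (lt_of_le_of_lt hj h)

lemma Gsigma_adj_iff {V : Type*} [DecidableEq V] (G : SimpleGraph V) [DecidableRel G.Adj]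
    {n : ℕ} (σ : Fin n ≃ V) (u v : V) :
    (Gsigma G σ).Adj u v ↔ u ≠ v ∧
      (σ.symm u < fnon G σ (σ.symm v) ∨ σ.symm v < fnon G σ (σ.symm u)) := by
  rw [Gsigma, SimpleGraph.fromRel_adj]
  constructor
  · rintro ⟨hne, h | h⟩
    · obtain ⟨i, rfl, hv⟩ := h
      refine ⟨hne, Or.inl ?_⟩
      rw [Equiv.symm_apply_apply]
      rw [← Equiv.apply_symm_apply σ v] at hv
      exact (mem_Vset_iff G σ i (σ.symm v)).mp hv
    · obtain ⟨i, rfl, hv⟩ := h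
      refine ⟨hne, Or.inr ?_⟩
      rw [Equiv.symm_apply_apply]
      rw [← Equiv.apply_symm_apply σ u] at hv
      exact (mem_Vset_iff G σ i (σ.symm u)).mp hv
  · rintro ⟨hne, h | h⟩
    · refine ⟨hne, Or.inl ⟨σ.symm u, (σ.apply_symm_apply u).symm, ?_⟩⟩
      rw [← Equiv.apply_symm_apply σ v]
      exact (mem_Vset_iff G σ _ _).mpr h
    · refine ⟨hne, Or.inr ⟨σ.symm v, (σ.apply_symm_apply v).symm, ?_⟩⟩
      rw [← Equiv.apply_symm_apply σ u]
      exact (mem_Vset_iff G σ _ _).mpr h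

/-- `G^σ` is an interval-order subgraph of `G`. -/
theorem Gsigma_interval_order_subgraph {V : Type*} [Fintype V] (G : SimpleGraph V)
    (σ : Fin (Fintype.card V) ≃ V) :
    Gsigma G σ ≤ G ∧ IsIntervalGraph (Gsigma G σ)ᶜ := by
  classical
  constructor
  · intro u v h
    rw [Gsigma_adj_iff] at h
    obtain ⟨hne, h | h⟩ := h
    · have := adj_of_lt_fnon G σ h
      simpa using this
    · have := (adj_of_lt_fnon G σ h).symm
      simpa using this
  · refine ⟨fun v => ((fnon G σ (σ.symm v) : ℕ) : ℝ),
      fun v => ((σ.symm v : ℕ) : ℝ), fun v => ?_, fun u v hne => ?_⟩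
    · show ((fnon G σ (σ.symm v) : ℕ) : ℝ) ≤ ((σ.symm v : ℕ) : ℝ)
      exact_mod_cast fnon_le G σ (σ.symm v)
    · have hA : (Gsigma G σ).Adj u v ↔
          (σ.symm u < fnon G σ (σ.symm v) ∨ σ.symm v < fnon G σ (σ.symm u)) := by
        rw [Gsigma_adj_iff]; exact and_iff_right hne
      rw [SimpleGraph.compl_adj, and_iff_right hne, hA, not_or, not_lt, not_lt]
      simp only [Set.Icc_inter_Icc, Set.nonempty_Icc, le_min_iff, max_le_iff]
      have hu : ((fnon G σ (σ.symm u) : ℕ) : ℝ) ≤ ((σ.symm u : ℕ) : ℝ) := by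
        exact_mod_cast fnon_le G σ (σ.symm u)
      have hv : ((fnon G σ (σ.symm v) : ℕ) : ℝ) ≤ ((σ.symm v : ℕ) : ℝ) := by
        exact_mod_cast fnon_le G σ (σ.symm v)
      constructor
      · rintro ⟨h1, h2⟩
        exact ⟨⟨hu, by exact_mod_cast h1⟩, by exact_mod_cast h2, hv⟩
      · rintro ⟨⟨-, h1⟩, h2, -⟩
        exact ⟨by exact_mod_cast h1, by exact_mod_cast h2⟩
end

section
/- Every inclusion-wise maximal interval-order subgraph H of a graph G = (V,E) equals G^σ for some linear ordering σ of V, where G^σ is defined by the prefix-intersection construction. -/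
open SimpleGraph

/-- Every inclusion-wise maximal interval-order subgraph of `G` is `G^σ` for some ordering. -/
theorem maximal_interval_order_eq_Gsigma {V : Type*} [Fintype V] (G H : SimpleGraph V)
    (hsub : H ≤ G) (hio : IsIntervalGraph Hᶜ)
    (hmax : ∀ H', H' ≤ G → IsIntervalGraph H'ᶜ → H ≤ H' → H' = H) :
    ∃ σ : Fin (Fintype.card V) ≃ V, H = Gsigma G σ := by
  classical
  obtain ⟨lo, hi, hlh, hadj⟩ := hio
  -- characterization of H via interval disjointness
  have hNon : ∀ u v : V, (Set.Icc (lo u) (hi u) ∩ Set.Icc (lo v) (hi v)).Nonempty ↔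
      (lo u ≤ hi v ∧ lo v ≤ hi u) := by
    intro u v
    rw [Set.Icc_inter_Icc, Set.nonempty_Icc, sup_le_iff, le_inf_iff, le_inf_iff]
    constructor
    · rintro ⟨⟨-, h1⟩, h2, -⟩; exact ⟨h1, h2⟩
    · rintro ⟨h1, h2⟩; exact ⟨⟨hlh u, h1⟩, h2, hlh v⟩
  have hH : ∀ u v : V, u ≠ v → (H.Adj u v ↔ (hi u < lo v ∨ hi v < lo u)) := by
    intro u v huv
    have h1 := hadj u v huv
    rw [compl_adj, hNon] at h1
    have h2 : ¬ H.Adj u v ↔ (lo u ≤ hi v ∧ lo v ≤ hi u) := by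
      rw [← h1]; simp [huv]
    constructor
    · intro h
      by_contra hc
      push_neg at hc
      exact h.ne' (False.elim (absurd (h2.mpr ⟨hc.2, hc.1⟩) (not_not.mpr h))) |>.elim
    · intro h
      by_contra hna
      rcases h2.mp hna with ⟨ha, hb⟩
      rcases h with h | h <;> linarith
  -- the ordering: sort vertices by right endpoint
  let e : Fin (Fintype.card V) ≃ V := (Fintype.equivFin V).symm
  let π : Equiv.Perm (Fin (Fintype.card V)) := Tuple.sort (hi ∘ e)
  let σ : Fin (Fintype.card V) ≃ V := π.trans e
  have hmono : ∀ i j : Fin (Fintype.card V), i ≤ j → hi (σ i) ≤ hi (σ j) := by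
    intro i j hij
    exact Tuple.monotone_sort (hi ∘ e) hij
  -- the least non-neighbor index
  let t : Fin (Fintype.card V) → Fin (Fintype.card V) := fun m =>
    (Finset.univ.filter (fun j => ¬ G.Adj (σ j) (σ m))).min'
      ⟨m, by simp⟩
  have ht1 : ∀ m, ¬ G.Adj (σ (t m)) (σ m) := by
    intro m
    have h := Finset.min'_mem (Finset.univ.filter (fun j => ¬ G.Adj (σ j) (σ m))) ⟨m, by simp⟩
    rw [Finset.mem_filter] at h
    exact h.2
  have ht2 : ∀ m, t m ≤ m := by
    intro m
    exact Finset.min'_le (Finset.univ.filter (fun j => ¬ G.Adj (σ j) (σ m))) m (by simp)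
  have ht3 : ∀ m j, j < t m → G.Adj (σ j) (σ m) := by
    intro m j hj
    by_contra hc
    exact absurd (Finset.min'_le (Finset.univ.filter (fun j => ¬ G.Adj (σ j) (σ m))) j
      (Finset.mem_filter.mpr ⟨Finset.mem_univ _, hc⟩)) (not_le.mpr hj)
  have hVset : ∀ a b : Fin (Fintype.card V), (σ b ∈ Vset G σ a ↔ a < t b) := by
    intro a b
    constructor
    · intro h
      by_contra hc
      push_neg at hc
      exact ht1 b (h (t b) hc)
    · intro h j hj
      exact ht3 b j (lt_of_le_of_lt hj h)
  have hK : ∀ a b : Fin (Fintype.card V), a ≠ b →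
      ((Gsigma G σ).Adj (σ a) (σ b) ↔ (a < t b ∨ b < t a)) := by
    intro a b hab
    rw [Gsigma, fromRel_adj]
    constructor
    · rintro ⟨-, h | h⟩
      · obtain ⟨i, hi1, hi2⟩ := h
        have : i = a := σ.injective hi1.symm
        subst this
        exact Or.inl ((hVset i b).mp hi2)
      · obtain ⟨i, hi1, hi2⟩ := h
        have : i = b := σ.injective hi1.symm
        subst this
        exact Or.inr ((hVset i a).mp hi2)
    · intro h
      refine ⟨fun hc => hab (σ.injective hc), ?_⟩
      rcases h with h | h
      · exact Or.inl ⟨a, rfl, (hVset a b).mpr h⟩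
      · exact Or.inr ⟨b, rfl, (hVset b a).mpr h⟩
  have hKG : Gsigma G σ ≤ G := by
    intro u v h
    rw [Gsigma, fromRel_adj] at h
    obtain ⟨hne, h | h⟩ := h
    · obtain ⟨i, rfl, hv⟩ := h; exact hv i le_rfl
    · obtain ⟨i, rfl, hv⟩ := h; exact (hv i le_rfl).symm
  have hstep : ∀ u v : V, hi u < lo v → (Gsigma G σ).Adj u v := by
    intro u v huv
    have hne : u ≠ v := by
      intro h; rw [h] at huv; linarith [hlh v]
    have hmem : v ∈ Vset G σ (σ.symm u) := by
      intro j hj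
      have h1 : hi (σ j) ≤ hi u := by
        have := hmono j (σ.symm u) hj
        rwa [σ.apply_symm_apply] at this
      have h2 : σ j ≠ v := by
        intro h; rw [h] at h1; linarith [hlh v]
      exact hsub ((hH (σ j) v h2).mpr (Or.inl (lt_of_le_of_lt h1 huv)))
    rw [Gsigma, fromRel_adj]
    exact ⟨hne, Or.inl ⟨σ.symm u, (σ.apply_symm_apply u).symm, hmem⟩⟩
  have hHK : H ≤ Gsigma G σ := by
    intro u v h
    rcases (hH u v h.ne).mp h with h1 | h1
    · exact hstep u v h1
    · exact (hstep v u h1).symm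
  have hIK : IsIntervalGraph (Gsigma G σ)ᶜ := by
    refine ⟨fun v => ((t (σ.symm v) : ℕ) : ℝ), fun v => ((σ.symm v : ℕ) : ℝ), ?_, ?_⟩
    · intro v
      dsimp only
      exact_mod_cast ht2 (σ.symm v)
    · intro u v huv
      dsimp only
      rw [compl_adj]
      have hab : σ.symm u ≠ σ.symm v := fun h => huv (σ.symm.injective h)
      have hu : u = σ (σ.symm u) := (σ.apply_symm_apply u).symm
      have hv : v = σ (σ.symm v) := (σ.apply_symm_apply v).symm
      rw [Set.Icc_inter_Icc, Set.nonempty_Icc, sup_le_iff, le_inf_iff, le_inf_iff]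
      constructor
      · rintro ⟨-, hna⟩
        rw [hu, hv, hK _ _ hab] at hna
        push_neg at hna
        refine ⟨⟨?_, ?_⟩, ?_, ?_⟩
        · exact_mod_cast ht2 (σ.symm u)
        · exact_mod_cast hna.2
        · exact_mod_cast hna.1
        · exact_mod_cast ht2 (σ.symm v)
      · rintro ⟨⟨-, h1⟩, h2, -⟩
        refine ⟨huv, ?_⟩
        rw [hu, hv, hK _ _ hab]
        rw [not_or, not_lt, not_lt]
        constructor
        · exact_mod_cast h2
        · exact_mod_cast h1
  exact ⟨σ, (hmax (Gsigma G σ) hKG hIK hHK).symm⟩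
end

section
/- For every n ≥ 5, the boxicity of KG(n,2) is at most n - 2; equivalently, the line graph L(K_n) admits a cover of its edge set by n - 2 interval-order subgraphs. -/
open SimpleGraph

/-- The line graph of `K_n`, realized as the complement of the Kneser graph `KG(n,2)`. -/
def lineKn (n : ℕ) : SimpleGraph {s : Finset (Fin n) // s.card = 2} := (kneser2 n)ᶜ


section Aux

noncomputable def oth {n : ℕ} (k : Fin n) (u : {s : Finset (Fin n) // s.card = 2}) : Fin n :=
  if h : (u.1.erase k).Nonempty then h.choose else k

lemma oth_spec {n : ℕ} {k : Fin n} {u : {s : Finset (Fin n) // s.card = 2}} (hk : k ∈ u.1) :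
    oth k u ≠ k ∧ u.1 = {k, oth k u} := by
  have hcard : (u.1.erase k).card = 1 := by
    rw [Finset.card_erase_of_mem hk, u.2]
  have hne : (u.1.erase k).Nonempty := Finset.card_pos.mp (by omega)
  rw [oth, dif_pos hne]
  have hmem := hne.choose_spec
  have h1 : hne.choose ≠ k := (Finset.mem_erase.mp hmem).1
  have h2 : hne.choose ∈ u.1 := (Finset.mem_erase.mp hmem).2
  refine ⟨h1, ?_⟩
  have hsub : ({k, hne.choose} : Finset (Fin n)) ⊆ u.1 := by
    intro x hx
    rcases Finset.mem_insert.mp hx with rfl | hx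
    · exact hk
    · rw [Finset.mem_singleton.mp hx]; exact h2
  have hc2 : ({k, hne.choose} : Finset (Fin n)).card = 2 := Finset.card_pair (Ne.symm h1)
  exact (Finset.eq_of_subset_of_card_le hsub (by rw [u.2, hc2])).symm

lemma eq_oth {n : ℕ} {k a : Fin n} {u : {s : Finset (Fin n) // s.card = 2}}
    (hk : k ∈ u.1) (ha : a ∈ u.1) (hak : a ≠ k) : a = oth k u := by
  have h := (oth_spec hk).2
  rw [h] at ha
  rcases Finset.mem_insert.mp ha with h' | h'
  · exact absurd h' hak
  · exact Finset.mem_singleton.mp h'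

def Hgr (n : ℕ) (k p q : Fin n) : SimpleGraph {s : Finset (Fin n) // s.card = 2} :=
  SimpleGraph.fromRel (fun u v =>
    (k ∈ u.1 ∧ k ∈ v.1) ∨ (u.1 = {k, p} ∧ p ∈ v.1) ∨ (u.1 = {k, q} ∧ q ∈ v.1))

lemma Hgr_adj_char {n : ℕ} {k p q : Fin n} (hkp : k ≠ p) (hkq : k ≠ q)
    {u v : {s : Finset (Fin n) // s.card = 2}} :
    (Hgr n k p q).Adj u v ↔ u ≠ v ∧
      ((k ∈ u.1 ∧ k ∈ v.1) ∨
       (k ∈ u.1 ∧ oth k u = p ∧ p ∈ v.1) ∨ (k ∈ u.1 ∧ oth k u = q ∧ q ∈ v.1) ∨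
       (k ∈ v.1 ∧ oth k v = p ∧ p ∈ u.1) ∨ (k ∈ v.1 ∧ oth k v = q ∧ q ∈ u.1)) := by
  rw [Hgr, SimpleGraph.fromRel_adj]
  constructor
  · rintro ⟨hne, h⟩
    refine ⟨hne, ?_⟩
    have key : ∀ (w : {s : Finset (Fin n) // s.card = 2}) (c : Fin n), c ≠ k →
        w.1 = {k, c} → k ∈ w.1 ∧ oth k w = c := by
      intro w c hc hw
      have hkw : k ∈ w.1 := by rw [hw]; simp
      exact ⟨hkw, (eq_oth hkw (by rw [hw]; simp) hc).symm⟩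
    rcases h with (⟨h1,h2⟩|⟨h1,h2⟩|⟨h1,h2⟩)|(⟨h1,h2⟩|⟨h1,h2⟩|⟨h1,h2⟩)
    · exact Or.inl ⟨h1, h2⟩
    · obtain ⟨hm, ho⟩ := key u p (Ne.symm hkp) h1
      exact Or.inr (Or.inl ⟨hm, ho, h2⟩)
    · obtain ⟨hm, ho⟩ := key u q (Ne.symm hkq) h1
      exact Or.inr (Or.inr (Or.inl ⟨hm, ho, h2⟩))
    · exact Or.inl ⟨h2, h1⟩
    · obtain ⟨hm, ho⟩ := key v p (Ne.symm hkp) h1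
      exact Or.inr (Or.inr (Or.inr (Or.inl ⟨hm, ho, h2⟩)))
    · obtain ⟨hm, ho⟩ := key v q (Ne.symm hkq) h1
      exact Or.inr (Or.inr (Or.inr (Or.inr ⟨hm, ho, h2⟩)))
  · rintro ⟨hne, h⟩
    refine ⟨hne, ?_⟩
    rcases h with ⟨h1,h2⟩|⟨h1,h2,h3⟩|⟨h1,h2,h3⟩|⟨h1,h2,h3⟩|⟨h1,h2,h3⟩
    · exact Or.inl (Or.inl ⟨h1, h2⟩)
    · exact Or.inl (Or.inr (Or.inl ⟨by rw [(oth_spec h1).2, h2], h3⟩))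
    · exact Or.inl (Or.inr (Or.inr ⟨by rw [(oth_spec h1).2, h2], h3⟩))
    · exact Or.inr (Or.inr (Or.inl ⟨by rw [(oth_spec h1).2, h2], h3⟩))
    · exact Or.inr (Or.inr (Or.inr ⟨by rw [(oth_spec h1).2, h2], h3⟩))

lemma Hgr_le {n : ℕ} {k p q : Fin n} {u v : {s : Finset (Fin n) // s.card = 2}}
    (h : (Hgr n k p q).Adj u v) : u ≠ v ∧ ¬ Disjoint u.1 v.1 := by
  rw [Hgr, SimpleGraph.fromRel_adj] at h
  obtain ⟨hne, hr⟩ := h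
  refine ⟨hne, Finset.not_disjoint_iff.mpr ?_⟩
  rcases hr with (⟨h1,h2⟩|⟨h1,h2⟩|⟨h1,h2⟩)|(⟨h1,h2⟩|⟨h1,h2⟩|⟨h1,h2⟩)
  · exact ⟨k, h1, h2⟩
  · exact ⟨p, by rw [h1]; simp, h2⟩
  · exact ⟨q, by rw [h1]; simp, h2⟩
  · exact ⟨k, h2, h1⟩
  · exact ⟨p, h2, by rw [h1]; simp⟩
  · exact ⟨q, h2, by rw [h1]; simp⟩

noncomputable def posf (n : ℕ) (p q a : Fin n) : ℝ :=
  if a = p then 0 else if a = q then (n : ℝ) else (a : ℝ) + 1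

noncomputable def lof (n : ℕ) (k p q : Fin n) (u : {s : Finset (Fin n) // s.card = 2}) : ℝ :=
  if k ∈ u.1 then posf n p q (oth k u) else if p ∈ u.1 then 1/2 else 0

noncomputable def hif (n : ℕ) (k p q : Fin n) (u : {s : Finset (Fin n) // s.card = 2}) : ℝ :=
  if k ∈ u.1 then posf n p q (oth k u) else if q ∈ u.1 then (n : ℝ) - 1/2 else (n : ℝ)

lemma posf_bound {n : ℕ} (hn : 5 ≤ n) {p q a : Fin n}
    (hp : (p : ℕ) = n - 2) (hq : (q : ℕ) = n - 1) (hap : a ≠ p) (haq : a ≠ q) :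
    1 ≤ posf n p q a ∧ posf n p q a ≤ (n : ℝ) - 2 := by
  have h1 : (a : ℕ) + 3 ≤ n := by
    have h2 : (a : ℕ) ≠ n - 2 := fun h => hap (Fin.ext (by rw [h, hp]))
    have h3 : (a : ℕ) ≠ n - 1 := fun h => haq (Fin.ext (by rw [h, hq]))
    have := a.isLt
    omega
  have h1' : ((a : ℕ) : ℝ) + 3 ≤ (n : ℝ) := by exact_mod_cast h1
  have h0 : (0:ℝ) ≤ ((a : ℕ) : ℝ) := Nat.cast_nonneg _
  rw [posf, if_neg hap, if_neg haq]
  constructor <;> linarith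

lemma lof_le_hif {n : ℕ} (hn : 5 ≤ n) (k p q : Fin n)
    (u : {s : Finset (Fin n) // s.card = 2}) : lof n k p q u ≤ hif n k p q u := by
  have hn5 : (5:ℝ) ≤ (n:ℝ) := by exact_mod_cast hn
  rw [lof, hif]
  by_cases hk : k ∈ u.1
  · rw [if_pos hk, if_pos hk]
  · rw [if_neg hk, if_neg hk]
    split_ifs <;> linarith

lemma posf_inj {n : ℕ} (hn : 5 ≤ n) {p q a b : Fin n}
    (hp : (p : ℕ) = n - 2) (hq : (q : ℕ) = n - 1) (hab : a ≠ b) :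
    posf n p q a ≠ posf n p q b := by
  have hn5 : (5:ℝ) ≤ (n:ℝ) := by exact_mod_cast hn
  have hpq : p ≠ q := fun h => by rw [h] at hp; omega
  have hP : posf n p q p = 0 := by rw [posf, if_pos rfl]
  have hQ : posf n p q q = (n:ℝ) := by rw [posf, if_neg (Ne.symm hpq), if_pos rfl]
  by_cases hap : a = p
  · subst hap
    by_cases hbq : b = q
    · subst hbq; rw [hP, hQ]; intro h; linarith
    · have hb := posf_bound hn hp hq (Ne.symm hab) hbq
      rw [hP]; intro h; linarith [hb.1]
  · by_cases haq : a = q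
    · subst haq
      by_cases hbp : b = p
      · subst hbp; rw [hP, hQ]; intro h; linarith
      · have hb := posf_bound hn hp hq hbp (Ne.symm hab)
        rw [hQ]; intro h; linarith [hb.2]
    · have ha := posf_bound hn hp hq hap haq
      by_cases hbp : b = p
      · subst hbp; rw [hP]; intro h; linarith [ha.1]
      · by_cases hbq : b = q
        · subst hbq; rw [hQ]; intro h; linarith [ha.2]
        · rw [posf, if_neg hap, if_neg haq, posf, if_neg hbp, if_neg hbq]
          intro h
          have hv : ((a:ℕ):ℝ) = ((b:ℕ):ℝ) := by linarith
          exact hab (Fin.ext (by exact_mod_cast hv))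

lemma interval_iff {n : ℕ} (hn : 5 ≤ n) {k p q : Fin n}
    (hk : (k : ℕ) < n - 2) (hp : (p : ℕ) = n - 2) (hq : (q : ℕ) = n - 1) :
    ∀ u v, u ≠ v →
      ((Hgr n k p q).Adj u v ↔
        ¬ (Set.Icc (lof n k p q u) (hif n k p q u) ∩
            Set.Icc (lof n k p q v) (hif n k p q v)).Nonempty) := by
  have hn5 : (5:ℝ) ≤ (n:ℝ) := by exact_mod_cast hn
  have hkp : k ≠ p := fun h => by rw [h] at hk; omega
  have hkq : k ≠ q := fun h => by rw [h] at hk; omega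
  have hpq : p ≠ q := fun h => by rw [h] at hp; omega
  have hP : posf n p q p = 0 := by rw [posf, if_pos rfl]
  have hQ : posf n p q q = (n:ℝ) := by rw [posf, if_neg (Ne.symm hpq), if_pos rfl]
  have lb : ∀ w : {s : Finset (Fin n) // s.card = 2}, k ∉ w.1 →
      0 ≤ lof n k p q w ∧ lof n k p q w ≤ 1/2 ∧
      (n:ℝ) - 1/2 ≤ hif n k p q w ∧ hif n k p q w ≤ (n:ℝ) := by
    intro w hkw
    rw [lof, hif, if_neg hkw, if_neg hkw]
    split_ifs <;> norm_num <;> linarith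
  have hNon : ∀ u v : {s : Finset (Fin n) // s.card = 2},
      (Set.Icc (lof n k p q u) (hif n k p q u) ∩
        Set.Icc (lof n k p q v) (hif n k p q v)).Nonempty ↔
      (lof n k p q u ≤ hif n k p q v ∧ lof n k p q v ≤ hif n k p q u) := by
    intro u v
    rw [Set.Icc_inter_Icc, Set.nonempty_Icc, sup_le_iff, le_inf_iff, le_inf_iff]
    exact ⟨fun h => ⟨h.1.2, h.2.1⟩,
      fun h => ⟨⟨lof_le_hif hn k p q u, h.1⟩, ⟨h.2, lof_le_hif hn k p q v⟩⟩⟩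
  have key : ∀ u v, u ≠ v → k ∈ u.1 → ¬ (k ∈ v.1) →
      ((Hgr n k p q).Adj u v ↔
        ¬ (lof n k p q u ≤ hif n k p q v ∧ lof n k p q v ≤ hif n k p q u)) := by
    intro u v huv hku hkv
    have hlu : lof n k p q u = posf n p q (oth k u) := by rw [lof, if_pos hku]
    have hhu : hif n k p q u = posf n p q (oth k u) := by rw [hif, if_pos hku]
    have hlv : lof n k p q v = if p ∈ v.1 then 1/2 else 0 := by rw [lof, if_neg hkv]
    have hhv : hif n k p q v = if q ∈ v.1 then (n:ℝ) - 1/2 else (n:ℝ) := by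
      rw [hif, if_neg hkv]
    rw [Hgr_adj_char hkp hkq]
    have hadj : (u ≠ v ∧
        ((k ∈ u.1 ∧ k ∈ v.1) ∨
         (k ∈ u.1 ∧ oth k u = p ∧ p ∈ v.1) ∨ (k ∈ u.1 ∧ oth k u = q ∧ q ∈ v.1) ∨
         (k ∈ v.1 ∧ oth k v = p ∧ p ∈ u.1) ∨ (k ∈ v.1 ∧ oth k v = q ∧ q ∈ u.1))) ↔
        ((oth k u = p ∧ p ∈ v.1) ∨ (oth k u = q ∧ q ∈ v.1)) := by
      simp only [hku, hkv, huv, true_and, false_and, and_false, or_false, false_or,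
        ne_eq, not_false_iff]
    rw [hadj, hlu, hhu, hlv, hhv]
    by_cases hap : oth k u = p
    · rw [hap, hP]
      by_cases hpv : p ∈ v.1
      · refine iff_of_true (Or.inl ⟨rfl, hpv⟩) ?_
        rw [if_pos hpv]
        intro hc
        have := hc.2
        linarith
      · refine iff_of_false ?_ ?_
        · rintro (⟨_, hc⟩ | ⟨hc, _⟩)
          · exact hpv hc
          · exact hpq hc
        · rw [not_not, if_neg hpv]
          exact ⟨by split_ifs <;> linarith, le_refl 0⟩
    · by_cases haq : oth k u = q
      · rw [haq, hQ]
        by_cases hqv : q ∈ v.1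
        · refine iff_of_true (Or.inr ⟨rfl, hqv⟩) ?_
          rw [if_pos hqv]
          intro hc
          have := hc.1
          linarith
        · refine iff_of_false ?_ ?_
          · rintro (⟨hc, _⟩ | ⟨_, hc⟩)
            · exact hpq hc.symm
            · exact hqv hc
          · rw [not_not, if_neg hqv]
            exact ⟨le_refl _, by split_ifs <;> linarith⟩
      · have hb := posf_bound hn hp hq hap haq
        refine iff_of_false ?_ ?_
        · rintro (⟨hc, _⟩ | ⟨hc, _⟩)
          · exact hap hc
          · exact haq hc
        · rw [not_not]
          constructor <;> split_ifs <;> linarith [hb.1, hb.2]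
  intro u v huv
  rw [hNon]
  by_cases hku : k ∈ u.1
  · by_cases hkv : k ∈ v.1
    · obtain ⟨hau, hu⟩ := oth_spec hku
      obtain ⟨hav, hv⟩ := oth_spec hkv
      have hab : oth k u ≠ oth k v := by
        intro h
        exact huv (Subtype.ext (by rw [hu, hv, h]))
      have hne := posf_inj hn hp hq hab
      have hlu : lof n k p q u = posf n p q (oth k u) := by rw [lof, if_pos hku]
      have hhu : hif n k p q u = posf n p q (oth k u) := by rw [hif, if_pos hku]
      have hlv : lof n k p q v = posf n p q (oth k v) := by rw [lof, if_pos hkv]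
      have hhv : hif n k p q v = posf n p q (oth k v) := by rw [hif, if_pos hkv]
      refine iff_of_true ((Hgr_adj_char hkp hkq).mpr ⟨huv, Or.inl ⟨hku, hkv⟩⟩) ?_
      rw [hlu, hhu, hlv, hhv]
      intro hc
      exact hne (le_antisymm hc.1 hc.2)
    · exact key u v huv hku hkv
  · by_cases hkv : k ∈ v.1
    · rw [SimpleGraph.adj_comm, and_comm]
      exact key v u (Ne.symm huv) hkv hku
    · refine iff_of_false ?_ ?_
      · intro hadj
        rcases ((Hgr_adj_char hkp hkq).mp hadj).2 with
          ⟨h,_⟩|⟨h,_⟩|⟨h,_⟩|⟨h,_⟩|⟨h,_⟩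
        · exact hku h
        · exact hku h
        · exact hku h
        · exact hkv h
        · exact hkv h
      · rw [not_not]
        have l1 := lb u hku
        have l2 := lb v hkv
        constructor <;> linarith [l1.1, l1.2.1, l1.2.2.1, l1.2.2.2,
          l2.1, l2.2.1, l2.2.2.1, l2.2.2.2]

lemma cover {n : ℕ} (hn : 5 ≤ n) {p q : Fin n} (hp : (p:ℕ) = n-2) (hq : (q:ℕ) = n-1)
    {u v : {s : Finset (Fin n) // s.card = 2}} (huv : u ≠ v) (hnd : ¬ Disjoint u.1 v.1) :
    ∃ i : Fin (n-2), (Hgr n (Fin.castLE (by omega) i) p q).Adj u v := by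
  obtain ⟨c, hcu, hcv⟩ := Finset.not_disjoint_iff.mp hnd
  by_cases hcb : (c:ℕ) < n - 2
  · refine ⟨⟨(c:ℕ), hcb⟩, ?_⟩
    have hc : (Fin.castLE (by omega : n - 2 ≤ n) (⟨(c:ℕ), hcb⟩ : Fin (n-2))) = c :=
      Fin.ext rfl
    rw [hc, Hgr, SimpleGraph.fromRel_adj]
    exact ⟨huv, Or.inl (Or.inl ⟨hcu, hcv⟩)⟩
  · have hcor : c = p ∨ c = q := by
      have h1 := c.isLt
      have : (c:ℕ) = n - 2 ∨ (c:ℕ) = n - 1 := by omega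
      rcases this with h | h
      · exact Or.inl (Fin.ext (by rw [h, hp]))
      · exact Or.inr (Fin.ext (by rw [h, hq]))
    obtain ⟨hau, hu⟩ := oth_spec hcu
    obtain ⟨hav, hv⟩ := oth_spec hcv
    have hab : oth c u ≠ oth c v := by
      intro h
      exact huv (Subtype.ext (by rw [hu, hv, h]))
    by_cases ha : ((oth c u : Fin n) : ℕ) < n - 2
    · refine ⟨⟨_, ha⟩, ?_⟩
      have hc : (Fin.castLE (by omega : n - 2 ≤ n) (⟨_, ha⟩ : Fin (n-2))) = oth c u :=
        Fin.ext rfl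
      rw [hc, Hgr, SimpleGraph.fromRel_adj]
      refine ⟨huv, Or.inl (Or.inr ?_)⟩
      rcases hcor with rfl | rfl
      · exact Or.inl ⟨by rw [hu, Finset.pair_comm], hcv⟩
      · exact Or.inr ⟨by rw [hu, Finset.pair_comm], hcv⟩
    · have hb : ((oth c v : Fin n) : ℕ) < n - 2 := by
        by_contra hbb
        have h1 := (oth c u).isLt
        have h2 := (oth c v).isLt
        have h3 : ((oth c u : Fin n) : ℕ) ≠ ((oth c v : Fin n) : ℕ) :=
          fun h => hab (Fin.ext h)
        have h4 : ((oth c u : Fin n) : ℕ) ≠ (c : ℕ) := fun h => hau (Fin.ext h)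
        have h5 : ((oth c v : Fin n) : ℕ) ≠ (c : ℕ) := fun h => hav (Fin.ext h)
        have h6 : (c:ℕ) = n - 2 ∨ (c:ℕ) = n - 1 := by
          have := c.isLt; omega
        omega
      refine ⟨⟨_, hb⟩, ?_⟩
      have hc : (Fin.castLE (by omega : n - 2 ≤ n) (⟨_, hb⟩ : Fin (n-2))) = oth c v :=
        Fin.ext rfl
      rw [hc, Hgr, SimpleGraph.fromRel_adj]
      refine ⟨huv, Or.inr (Or.inr ?_)⟩
      rcases hcor with rfl | rfl
      · exact Or.inl ⟨by rw [hv, Finset.pair_comm], hcu⟩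
      · exact Or.inr ⟨by rw [hv, Finset.pair_comm], hcu⟩

end Aux
/-- `boxi(KG(n,2)) ≤ n-2`, and `L(K_n)` has a cover by `n-2` interval-order subgraphs. -/
theorem kneser2_boxicity_upper (n : ℕ) (hn : 5 ≤ n) :
    boxicity (kneser2 n) ≤ n - 2 ∧
    ∃ H : Fin (n - 2) → SimpleGraph {s : Finset (Fin n) // s.card = 2},
      (∀ i, IsIntervalGraph (H i)ᶜ) ∧ (⨆ i, H i) = lineKn n := by
  set p : Fin n := ⟨n - 2, by omega⟩ with hpdef
  set q : Fin n := ⟨n - 1, by omega⟩ with hqdef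
  have hp : (p : ℕ) = n - 2 := rfl
  have hq : (q : ℕ) = n - 1 := rfl
  set ki : Fin (n - 2) → Fin n := fun i => Fin.castLE (by omega) i with hkidef
  have hkval : ∀ i : Fin (n - 2), ((ki i : Fin n) : ℕ) < n - 2 := fun i => i.isLt
  have hiff := fun i : Fin (n - 2) => interval_iff hn (hkval i) hp hq
  have hker : ∀ u v : {s : Finset (Fin n) // s.card = 2},
      (kneser2 n).Adj u v ↔ Disjoint u.1 v.1 := fun u v => Iff.rfl
  constructor
  · apply Nat.sInf_le
    refine ⟨fun u i => lof n (ki i) p q u, fun u i => hif n (ki i) p q u,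
      fun u i => lof_le_hif hn _ _ _ _, ?_⟩
    intro u v huv
    rw [hker]
    constructor
    · intro hdis i
      by_contra hne
      have hadj := (hiff i u v huv).mpr hne
      exact (Hgr_le hadj).2 hdis
    · intro hall
      by_contra hdis
      obtain ⟨i, hadj⟩ := cover hn hp hq huv hdis
      exact (hiff i u v huv).mp hadj (hall i)
  · refine ⟨fun i => Hgr n (ki i) p q, ?_, ?_⟩
    · intro i
      refine ⟨fun u => lof n (ki i) p q u, fun u => hif n (ki i) p q u,
        fun u => lof_le_hif hn _ _ _ _, ?_⟩
      intro u v huv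
      rw [SimpleGraph.compl_adj]
      constructor
      · rintro ⟨-, hna⟩
        by_contra hne
        exact hna ((hiff i u v huv).mpr hne)
      · intro hne
        exact ⟨huv, fun hadj => (hiff i u v huv).mp hadj hne⟩
    · ext u v
      rw [SimpleGraph.iSup_adj, lineKn, SimpleGraph.compl_adj]
      constructor
      · rintro ⟨i, hadj⟩
        obtain ⟨hne, hnd⟩ := Hgr_le hadj
        exact ⟨hne, fun h => hnd h⟩
      · rintro ⟨hne, hnd⟩
        exact cover hn hp hq hne (fun h => hnd h)
end

section
/- For n ≥ 5 and distinct vertices a,b,c,d,e of K_n, the subgraph of L(K_n) with edge set E_{a,b,c,d,e} = Q_a ∪ δ_{ab} ∪ δ_{ad} ∪ K_{{a,b,c}} ∪ K_{{a,d,e}} is an interval-order graph (its complement is an interval graph) and has exactly (n+2)(n-1)/2 edges. -/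
open SimpleGraph

/-- The clique `Q_v` in `L(K_n)` on the edges incident to `v`. -/
def Qv {n : ℕ} (a : Fin n) : SimpleGraph {s : Finset (Fin n) // s.card = 2} :=
  SimpleGraph.fromRel (fun e f => a ∈ e.1 ∧ a ∈ f.1)

/-- The star `δ_{uv}` of the vertex `uv` in `L(K_n)`. -/
def Dstar {n : ℕ} (u v : Fin n) : SimpleGraph {s : Finset (Fin n) // s.card = 2} :=
  SimpleGraph.fromRel (fun e f => e.1 = {u, v} ∧ ¬ Disjoint e.1 f.1)

/-- The half-star `δ_{uv⁻}`: edges from `uv` to edges of `K_n` incident to `u`. -/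
def DstarHalf {n : ℕ} (u v : Fin n) : SimpleGraph {s : Finset (Fin n) // s.card = 2} :=
  SimpleGraph.fromRel (fun e f => e.1 = {u, v} ∧ u ∈ f.1)

/-- `K_U`: the edge set of `L(K_n[U])`. -/
def KU {n : ℕ} (U : Finset (Fin n)) : SimpleGraph {s : Finset (Fin n) // s.card = 2} :=
  SimpleGraph.fromRel (fun e f => e.1 ⊆ U ∧ f.1 ⊆ U ∧ ¬ Disjoint e.1 f.1)

/-- `K_{u,v,w⁻} = {(uv,uw), (uv,vw)}`. -/
def Kminus {n : ℕ} (u v w : Fin n) : SimpleGraph {s : Finset (Fin n) // s.card = 2} :=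
  SimpleGraph.fromRel (fun e f => e.1 = {u, v} ∧ (f.1 = {u, w} ∨ f.1 = {v, w}))
open SimpleGraph

namespace TypeA

variable {n : ℕ}

abbrev Vn (n : ℕ) := {s : Finset (Fin n) // s.card = 2}

lemma pair_eq {s : Vn n} {x y : Fin n} (hx : x ∈ s.1) (hy : y ∈ s.1) (hxy : x ≠ y) :
    s.1 = {x, y} := by
  refine (Finset.eq_of_subset_of_card_le ?_ ?_).symm
  · intro z hz
    simp only [Finset.mem_insert, Finset.mem_singleton] at hz
    rcases hz with h | h <;> subst h <;> assumption
  · rw [s.2, Finset.card_pair hxy]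

lemma exists_other {s : Vn n} {x : Fin n} (hx : x ∈ s.1) :
    ∃ y, y ∈ s.1 ∧ y ≠ x := by
  have h1 : (s.1.erase x).card = 1 := by rw [Finset.card_erase_of_mem hx, s.2]
  obtain ⟨y, hy⟩ := Finset.card_eq_one.mp h1
  have hmem : y ∈ s.1.erase x := by rw [hy]; exact Finset.mem_singleton_self y
  exact ⟨y, Finset.mem_of_mem_erase hmem, Finset.ne_of_mem_erase hmem⟩

/-- The condition for `s` (containing `a`) to be adjacent to `t` (not containing `a`). -/
def Crel (b c d e : Fin n) (s t : Vn n) : Prop :=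
  (b ∈ s.1 ∧ b ∈ t.1) ∨ (d ∈ s.1 ∧ d ∈ t.1) ∨ (c ∈ s.1 ∧ t.1 = {b, c}) ∨
    (e ∈ s.1 ∧ t.1 = {d, e})

variable {a b c d e : Fin n}

lemma other_mem_of_not_disjoint {s t : Vn n} {w : Fin n} (hs : s.1 = {a, w})
    (hdis : ¬Disjoint s.1 t.1) (hat : a ∉ t.1) : w ∈ t.1 := by
  obtain ⟨x, hx1, hx2⟩ := Finset.not_disjoint_iff.mp hdis
  rw [hs] at hx1
  simp only [Finset.mem_insert, Finset.mem_singleton] at hx1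
  rcases hx1 with h | h
  · exact absurd (h ▸ hx2) hat
  · exact h ▸ hx2

lemma eq_bc_of_not_mem {u : Vn n} (hbc : b ≠ c) (hau : a ∉ u.1)
    (hu : u.1 ⊆ ({a, b, c} : Finset (Fin n))) : u.1 = {b, c} := by
  apply Finset.eq_of_subset_of_card_le
  · intro z hz
    have hz2 := hu hz
    simp only [Finset.mem_insert, Finset.mem_singleton] at hz2 ⊢
    rcases hz2 with h | h | h
    · exact absurd (h ▸ hz) hau
    · exact Or.inl h
    · exact Or.inr h
  · rw [u.2, Finset.card_pair hbc]

lemma ku_forward {s t : Vn n} (hac : a ≠ c) (hbc : b ≠ c)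
    (hs : s.1 ⊆ {a, b, c}) (ht : t.1 ⊆ {a, b, c}) (hdis : ¬Disjoint s.1 t.1)
    (hst : s ≠ t) :
    (a ∈ s.1 ∧ a ∈ t.1) ∨
      (a ∈ s.1 ∧ a ∉ t.1 ∧ ((b ∈ s.1 ∧ b ∈ t.1) ∨ (c ∈ s.1 ∧ t.1 = {b, c}))) ∨
      (a ∈ t.1 ∧ a ∉ s.1 ∧ ((b ∈ t.1 ∧ b ∈ s.1) ∨ (c ∈ t.1 ∧ s.1 = {b, c}))) := by
  have main : ∀ u v : Vn n, u.1 ⊆ ({a, b, c} : Finset (Fin n)) →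
      v.1 ⊆ ({a, b, c} : Finset (Fin n)) → a ∈ u.1 → a ∉ v.1 →
      (b ∈ u.1 ∧ b ∈ v.1) ∨ (c ∈ u.1 ∧ v.1 = {b, c}) := by
    intro u v hu hv hau hav
    have hv' := eq_bc_of_not_mem hbc hav hv
    obtain ⟨y, hyu, hya⟩ := exists_other hau
    have hy2 := hu hyu
    simp only [Finset.mem_insert, Finset.mem_singleton] at hy2
    rcases hy2 with h | h | h
    · exact absurd h hya
    · exact Or.inl ⟨h ▸ hyu, by rw [hv']; exact Finset.mem_insert_self b _⟩
    · exact Or.inr ⟨h ▸ hyu, hv'⟩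
  by_cases has : a ∈ s.1 <;> by_cases hat : a ∈ t.1
  · exact Or.inl ⟨has, hat⟩
  · exact Or.inr (Or.inl ⟨has, hat, main s t hs ht has hat⟩)
  · exact Or.inr (Or.inr ⟨hat, has, main t s ht hs hat has⟩)
  · exact absurd (Subtype.ext ((eq_bc_of_not_mem hbc has hs).trans
      (eq_bc_of_not_mem hbc hat ht).symm)) hst

lemma adj_char (hab : a ≠ b) (hac : a ≠ c) (had : a ≠ d) (hae : a ≠ e) (hbc : b ≠ c)
    (hbd : b ≠ d) (hbe : b ≠ e) (hcd : c ≠ d) (hce : c ≠ e) (hde : d ≠ e)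
    (s t : Vn n) (hst : s ≠ t) :
    (Qv a ⊔ Dstar a b ⊔ Dstar a d ⊔ KU {a, b, c} ⊔ KU {a, d, e}).Adj s t ↔
      (a ∈ s.1 ∧ a ∈ t.1) ∨ (a ∈ s.1 ∧ a ∉ t.1 ∧ Crel b c d e s t) ∨
        (a ∈ t.1 ∧ a ∉ s.1 ∧ Crel b c d e t s) := by
  simp only [sup_adj, Qv, Dstar, KU, fromRel_adj]
  constructor
  · rintro ((((⟨-, h⟩ | ⟨-, h⟩) | ⟨-, h⟩) | ⟨-, h⟩) | ⟨-, h⟩)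
    · rcases h with ⟨h1, h2⟩ | ⟨h1, h2⟩
      · exact Or.inl ⟨h1, h2⟩
      · exact Or.inl ⟨h2, h1⟩
    · -- Dstar a b
      rcases h with ⟨hs, hd⟩ | ⟨hs, hd⟩
      · have has : a ∈ s.1 := by rw [hs]; exact Finset.mem_insert_self a _
        by_cases hat : a ∈ t.1
        · exact Or.inl ⟨has, hat⟩
        · exact Or.inr (Or.inl ⟨has, hat, Or.inl ⟨by rw [hs]; simp,
            other_mem_of_not_disjoint hs hd hat⟩⟩)
      · have hat : a ∈ t.1 := by rw [hs]; exact Finset.mem_insert_self a _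
        by_cases has : a ∈ s.1
        · exact Or.inl ⟨has, hat⟩
        · exact Or.inr (Or.inr ⟨hat, has, Or.inl ⟨by rw [hs]; simp,
            other_mem_of_not_disjoint hs hd has⟩⟩)
    · -- Dstar a d
      rcases h with ⟨hs, hd⟩ | ⟨hs, hd⟩
      · have has : a ∈ s.1 := by rw [hs]; exact Finset.mem_insert_self a _
        by_cases hat : a ∈ t.1
        · exact Or.inl ⟨has, hat⟩
        · exact Or.inr (Or.inl ⟨has, hat, Or.inr (Or.inl ⟨by rw [hs]; simp,
            other_mem_of_not_disjoint hs hd hat⟩)⟩)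
      · have hat : a ∈ t.1 := by rw [hs]; exact Finset.mem_insert_self a _
        by_cases has : a ∈ s.1
        · exact Or.inl ⟨has, hat⟩
        · exact Or.inr (Or.inr ⟨hat, has, Or.inr (Or.inl ⟨by rw [hs]; simp,
            other_mem_of_not_disjoint hs hd has⟩)⟩)
    · -- KU {a,b,c}
      have h' : s.1 ⊆ {a, b, c} ∧ t.1 ⊆ {a, b, c} ∧ ¬Disjoint s.1 t.1 := by
        rcases h with ⟨h1, h2, h3⟩ | ⟨h1, h2, h3⟩
        · exact ⟨h1, h2, h3⟩
        · exact ⟨h2, h1, fun hd => h3 hd.symm⟩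
      rcases ku_forward hac hbc h'.1 h'.2.1 h'.2.2 hst with h1 | ⟨h1, h2, h3⟩ | ⟨h1, h2, h3⟩
      · exact Or.inl h1
      · refine Or.inr (Or.inl ⟨h1, h2, ?_⟩)
        rcases h3 with h3 | h3
        · exact Or.inl h3
        · exact Or.inr (Or.inr (Or.inl h3))
      · refine Or.inr (Or.inr ⟨h1, h2, ?_⟩)
        rcases h3 with ⟨h3, h4⟩ | h3
        · exact Or.inl ⟨h3, h4⟩
        · exact Or.inr (Or.inr (Or.inl h3))
    · -- KU {a,d,e}
      have h' : s.1 ⊆ {a, d, e} ∧ t.1 ⊆ {a, d, e} ∧ ¬Disjoint s.1 t.1 := by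
        rcases h with ⟨h1, h2, h3⟩ | ⟨h1, h2, h3⟩
        · exact ⟨h1, h2, h3⟩
        · exact ⟨h2, h1, fun hd => h3 hd.symm⟩
      rcases ku_forward hae hde h'.1 h'.2.1 h'.2.2 hst with h1 | ⟨h1, h2, h3⟩ | ⟨h1, h2, h3⟩
      · exact Or.inl h1
      · refine Or.inr (Or.inl ⟨h1, h2, ?_⟩)
        rcases h3 with h3 | h3
        · exact Or.inr (Or.inl h3)
        · exact Or.inr (Or.inr (Or.inr h3))
      · refine Or.inr (Or.inr ⟨h1, h2, ?_⟩)
        rcases h3 with ⟨h3, h4⟩ | h3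
        · exact Or.inr (Or.inl ⟨h3, h4⟩)
        · exact Or.inr (Or.inr (Or.inr h3))
  · intro h
    have hne : s ≠ t := hst
    rcases h with ⟨h1, h2⟩ | ⟨has, hat, hC⟩ | ⟨hat, has, hC⟩
    · exact Or.inl (Or.inl (Or.inl (Or.inl ⟨hne, Or.inl ⟨h1, h2⟩⟩)))
    · rcases hC with ⟨h1, h2⟩ | ⟨h1, h2⟩ | ⟨h1, h2⟩ | ⟨h1, h2⟩
      · exact Or.inl (Or.inl (Or.inl (Or.inr ⟨hne, Or.inl ⟨pair_eq has h1 hab,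
          Finset.not_disjoint_iff.mpr ⟨b, h1, h2⟩⟩⟩)))
      · exact Or.inl (Or.inl (Or.inr ⟨hne, Or.inl ⟨pair_eq has h1 had,
          Finset.not_disjoint_iff.mpr ⟨d, h1, h2⟩⟩⟩))
      · refine Or.inl (Or.inr ⟨hne, Or.inl ⟨?_, ?_, Finset.not_disjoint_iff.mpr
          ⟨c, h1, by rw [h2]; simp⟩⟩⟩)
        · rw [pair_eq has h1 hac]; intro z hz; simp at hz ⊢; tauto
        · rw [h2]; intro z hz; simp at hz ⊢; tauto
      · refine Or.inr ⟨hne, Or.inl ⟨?_, ?_, Finset.not_disjoint_iff.mpr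
          ⟨e, h1, by rw [h2]; simp⟩⟩⟩
        · rw [pair_eq has h1 hae]; intro z hz; simp at hz ⊢; tauto
        · rw [h2]; intro z hz; simp at hz ⊢; tauto
    · rcases hC with ⟨h1, h2⟩ | ⟨h1, h2⟩ | ⟨h1, h2⟩ | ⟨h1, h2⟩
      · exact Or.inl (Or.inl (Or.inl (Or.inr ⟨hne, Or.inr ⟨pair_eq hat h1 hab,
          Finset.not_disjoint_iff.mpr ⟨b, h1, h2⟩⟩⟩)))
      · exact Or.inl (Or.inl (Or.inr ⟨hne, Or.inr ⟨pair_eq hat h1 had,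
          Finset.not_disjoint_iff.mpr ⟨d, h1, h2⟩⟩⟩))
      · refine Or.inl (Or.inr ⟨hne, Or.inr ⟨?_, ?_, Finset.not_disjoint_iff.mpr
          ⟨c, h1, by rw [h2]; simp⟩⟩⟩)
        · rw [pair_eq hat h1 hac]; intro z hz; simp at hz ⊢; tauto
        · rw [h2]; intro z hz; simp at hz ⊢; tauto
      · refine Or.inr ⟨hne, Or.inr ⟨?_, ?_, Finset.not_disjoint_iff.mpr
          ⟨e, h1, by rw [h2]; simp⟩⟩⟩
        · rw [pair_eq hat h1 hae]; intro z hz; simp at hz ⊢; tauto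
        · rw [h2]; intro z hz; simp at hz ⊢; tauto

end TypeA
namespace TypeA

variable {n : ℕ}

noncomputable def pt (n : ℕ) (b c d e x : Fin n) : ℝ :=
  if x = b then 0 else if x = c then 1 else if x = d then 10 else if x = e then 9
  else 2 + 6 * (((x : ℕ) : ℝ) + 1) / ((n : ℝ) + 1)

variable {b c d e : Fin n}

lemma pt_eq_generic {x : Fin n} (h1 : x ≠ b) (h2 : x ≠ c) (h3 : x ≠ d) (h4 : x ≠ e) :
    pt n b c d e x = 2 + 6 * (((x : ℕ) : ℝ) + 1) / ((n : ℝ) + 1) := by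
  simp only [pt, if_neg h1, if_neg h2, if_neg h3, if_neg h4]

variable (hbc : b ≠ c) (hbd : b ≠ d) (hbe : b ≠ e) (hcd : c ≠ d) (hce : c ≠ e) (hde : d ≠ e)

section
include hbc hbd hbe hcd hce hde

lemma pt_cases (x : Fin n) :
    (x = b ∧ pt n b c d e x = 0) ∨ (x = c ∧ pt n b c d e x = 1) ∨
    (x = d ∧ pt n b c d e x = 10) ∨ (x = e ∧ pt n b c d e x = 9) ∨
    (x ≠ b ∧ x ≠ c ∧ x ≠ d ∧ x ≠ e ∧ 2 < pt n b c d e x ∧ pt n b c d e x < 8) := by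
  by_cases h1 : x = b
  · exact Or.inl ⟨h1, by simp [pt, h1]⟩
  by_cases h2 : x = c
  · exact Or.inr (Or.inl ⟨h2, by simp [pt, h2, Ne.symm hbc]⟩)
  by_cases h3 : x = d
  · exact Or.inr (Or.inr (Or.inl ⟨h3, by simp [pt, h3, Ne.symm hbd, Ne.symm hcd]⟩))
  by_cases h4 : x = e
  · exact Or.inr (Or.inr (Or.inr (Or.inl ⟨h4,
      by simp [pt, h4, Ne.symm hbe, Ne.symm hce, Ne.symm hde]⟩)))
  refine Or.inr (Or.inr (Or.inr (Or.inr ⟨h1, h2, h3, h4, ?_, ?_⟩)))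
  · rw [pt_eq_generic h1 h2 h3 h4]
    have : (0:ℝ) < 6 * (((x : ℕ) : ℝ) + 1) / ((n : ℝ) + 1) := by positivity
    linarith
  · rw [pt_eq_generic h1 h2 h3 h4]
    have hn1 : (0:ℝ) < (n : ℝ) + 1 := by positivity
    have hx : ((x : ℕ) : ℝ) + 1 ≤ (n : ℝ) := by
      have : ((x : ℕ) : ℝ) + 1 ≤ ((n : ℕ) : ℝ) := by exact_mod_cast Nat.succ_le_of_lt x.isLt
      exact_mod_cast this
    have : 6 * (((x : ℕ) : ℝ) + 1) / ((n : ℝ) + 1) < 6 := by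
      rw [div_lt_iff₀ hn1]; nlinarith
    linarith

lemma pt_inj {x y : Fin n} (h : pt n b c d e x = pt n b c d e y) : x = y := by
  rcases pt_cases hbc hbd hbe hcd hce hde x with
    ⟨hx, hvx⟩ | ⟨hx, hvx⟩ | ⟨hx, hvx⟩ | ⟨hx, hvx⟩ | ⟨hxb, hxc, hxd, hxe, hlx, hux⟩ <;>
  rcases pt_cases hbc hbd hbe hcd hce hde y with
    ⟨hy, hvy⟩ | ⟨hy, hvy⟩ | ⟨hy, hvy⟩ | ⟨hy, hvy⟩ | ⟨hyb, hyc, hyd, hye, hly, huy⟩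
  all_goals try exact hx.trans hy.symm
  all_goals try (exfalso; rw [hvx, hvy] at h; norm_num at h)
  all_goals try (exfalso; rw [hvx] at h; linarith)
  all_goals try (exfalso; rw [hvy] at h; linarith)
  · -- generic-generic
    rw [pt_eq_generic hxb hxc hxd hxe, pt_eq_generic hyb hyc hyd hye] at h
    have hn1 : ((n : ℝ) + 1) ≠ 0 := by positivity
    have h' : 6 * (((x : ℕ) : ℝ) + 1) / ((n : ℝ) + 1) =
        6 * (((y : ℕ) : ℝ) + 1) / ((n : ℝ) + 1) := by linarith
    have h2 := congrArg (fun z : ℝ => z * ((n : ℝ) + 1)) h'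
    simp only [div_mul_cancel₀ _ hn1] at h2
    have h3 : ((x : ℕ) : ℝ) = ((y : ℕ) : ℝ) := by linarith
    exact Fin.val_injective (by exact_mod_cast h3)

lemma pt_bounds (x : Fin n) : -1 ≤ pt n b c d e x ∧ pt n b c d e x ≤ 11 := by
  rcases pt_cases hbc hbd hbe hcd hce hde x with
    ⟨hx, hvx⟩ | ⟨hx, hvx⟩ | ⟨hx, hvx⟩ | ⟨hx, hvx⟩ | ⟨-, -, -, -, hlx, hux⟩ <;>
    first | (rw [hvx]; norm_num) | (constructor <;> linarith)

lemma pt_lt_half (x : Fin n) : pt n b c d e x < 0.5 ↔ x = b := by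
  rcases pt_cases hbc hbd hbe hcd hce hde x with
    ⟨hx, hvx⟩ | ⟨hx, hvx⟩ | ⟨hx, hvx⟩ | ⟨hx, hvx⟩ | ⟨hxb, -, -, -, hlx, hux⟩
  · subst hx; rw [hvx]; norm_num
  all_goals constructor
  all_goals try (intro h; exfalso; first | (rw [hvx] at h; norm_num at h) | linarith)
  all_goals intro h; exfalso
  · exact hbc (hx ▸ h).symm
  · exact hbd (hx ▸ h).symm
  · exact hbe (hx ▸ h).symm
  · exact hxb h

lemma pt_lt_3half (x : Fin n) : pt n b c d e x < 1.5 ↔ x = b ∨ x = c := by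
  rcases pt_cases hbc hbd hbe hcd hce hde x with
    ⟨hx, hvx⟩ | ⟨hx, hvx⟩ | ⟨hx, hvx⟩ | ⟨hx, hvx⟩ | ⟨hxb, hxc, -, -, hlx, hux⟩
  · subst hx; rw [hvx]; norm_num
  · subst hx; rw [hvx]; norm_num
  all_goals constructor
  all_goals try (intro h; exfalso; first | (rw [hvx] at h; norm_num at h) | linarith)
  all_goals rintro (h | h) <;> exfalso
  · exact hbd (hx ▸ h).symm
  · exact hcd (hx ▸ h).symm
  · exact hbe (hx ▸ h).symm
  · exact hce (hx ▸ h).symm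
  · exact hxb h
  · exact hxc h

lemma pt_gt95 (x : Fin n) : 9.5 < pt n b c d e x ↔ x = d := by
  rcases pt_cases hbc hbd hbe hcd hce hde x with
    ⟨hx, hvx⟩ | ⟨hx, hvx⟩ | ⟨hx, hvx⟩ | ⟨hx, hvx⟩ | ⟨-, -, hxd, -, hlx, hux⟩
  · subst hx; rw [hvx]; constructor
    · intro h; norm_num at h
    · intro h; exact absurd h hbd
  · subst hx; rw [hvx]; constructor
    · intro h; norm_num at h
    · intro h; exact absurd h hcd
  · subst hx; rw [hvx]; norm_num
  · subst hx; rw [hvx]; constructor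
    · intro h; norm_num at h
    · intro h; exact absurd h hde.symm
  · constructor
    · intro h; exfalso; linarith
    · intro h; exact absurd h hxd

lemma pt_gt85 (x : Fin n) : 8.5 < pt n b c d e x ↔ x = d ∨ x = e := by
  rcases pt_cases hbc hbd hbe hcd hce hde x with
    ⟨hx, hvx⟩ | ⟨hx, hvx⟩ | ⟨hx, hvx⟩ | ⟨hx, hvx⟩ | ⟨-, -, hxd, hxe, hlx, hux⟩
  · subst hx; rw [hvx]; constructor
    · intro h; norm_num at h
    · rintro (h | h); exacts [absurd h hbd, absurd h hbe]
  · subst hx; rw [hvx]; constructor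
    · intro h; norm_num at h
    · rintro (h | h); exacts [absurd h hcd, absurd h hce]
  · subst hx; rw [hvx]; norm_num
  · subst hx; rw [hvx]; norm_num
  · constructor
    · intro h; exfalso; linarith
    · rintro (h | h); exacts [absurd h hxd, absurd h hxe]

end

end TypeA
namespace TypeA

variable {n : ℕ}

noncomputable def loF (a b c d e : Fin n) (s : Vn n) : ℝ :=
  if a ∈ s.1 then ∑ x ∈ s.1.erase a, pt n b c d e x
  else if s.1 = {b, c} then 1.5 else if b ∈ s.1 then 0.5 else -1

noncomputable def hiF (a b c d e : Fin n) (s : Vn n) : ℝ :=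
  if a ∈ s.1 then ∑ x ∈ s.1.erase a, pt n b c d e x
  else if s.1 = {d, e} then 8.5 else if d ∈ s.1 then 9.5 else 11

variable {a b c d e : Fin n}

lemma erase_pair {s : Vn n} {x : Fin n} (hx : x ≠ a) (hs : s.1 = {a, x}) :
    s.1.erase a = {x} := by
  rw [hs]
  exact Finset.erase_insert (by simp [Ne.symm hx])

lemma loF_pair {s : Vn n} {x : Fin n} (hx : x ≠ a) (hs : s.1 = {a, x}) :
    loF a b c d e s = pt n b c d e x := by
  have ha : a ∈ s.1 := by rw [hs]; exact Finset.mem_insert_self a _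
  rw [loF, if_pos ha, erase_pair hx hs, Finset.sum_singleton]

lemma hiF_pair {s : Vn n} {x : Fin n} (hx : x ≠ a) (hs : s.1 = {a, x}) :
    hiF a b c d e s = pt n b c d e x := by
  have ha : a ∈ s.1 := by rw [hs]; exact Finset.mem_insert_self a _
  rw [hiF, if_pos ha, erase_pair hx hs, Finset.sum_singleton]

lemma loF_le_hiF (s : Vn n) : loF a b c d e s ≤ hiF a b c d e s := by
  by_cases ha : a ∈ s.1
  · rw [loF, hiF, if_pos ha, if_pos ha]
  · rw [loF, hiF, if_neg ha, if_neg ha]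
    split_ifs <;> norm_num

variable (hab : a ≠ b) (hac : a ≠ c) (had : a ≠ d) (hae : a ≠ e) (hbc : b ≠ c)
  (hbd : b ≠ d) (hbe : b ≠ e) (hcd : c ≠ d) (hce : c ≠ e) (hde : d ≠ e)

section
include hbc hbd hbe hcd hce hde

/-- Classification of vertices not containing `a`, bundling everything needed. -/
lemma classify (t : Vn n) (hat : a ∉ t.1) :
    -1 ≤ loF a b c d e t ∧ loF a b c d e t ≤ 1.5 ∧
    8.5 ≤ hiF a b c d e t ∧ hiF a b c d e t ≤ 11 ∧
    ∀ x : Fin n,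
      ((x = b ∧ b ∈ t.1) ∨ (x = d ∧ d ∈ t.1) ∨ (x = c ∧ t.1 = {b, c}) ∨
          (x = e ∧ t.1 = {d, e})) ↔
        (hiF a b c d e t < pt n b c d e x ∨ pt n b c d e x < loF a b c d e t) := by
  have hbde : b ∉ ({d, e} : Finset (Fin n)) := by simp [hbd, hbe]
  have hdbc : d ∉ ({b, c} : Finset (Fin n)) := by simp [Ne.symm hbd, Ne.symm hcd]
  by_cases hA : t.1 = {b, c}
  · have hbt : b ∈ t.1 := by rw [hA]; exact Finset.mem_insert_self b _
    have hB : t.1 ≠ {d, e} := by rw [hA]; intro h; exact hbde (h ▸ Finset.mem_insert_self b _)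
    have hdt : d ∉ t.1 := by rw [hA]; exact hdbc
    have hlo : loF a b c d e t = 1.5 := by rw [loF, if_neg hat, if_pos hA]
    have hhi : hiF a b c d e t = 11 := by rw [hiF, if_neg hat, if_neg hB, if_neg hdt]
    refine ⟨by rw [hlo]; norm_num, by rw [hlo], by rw [hhi]; norm_num, by rw [hhi], ?_⟩
    intro x
    rw [hlo, hhi]
    constructor
    · rintro (⟨rfl, -⟩ | ⟨rfl, hd⟩ | ⟨rfl, -⟩ | ⟨rfl, hE⟩)
      · exact Or.inr ((pt_lt_3half hbc hbd hbe hcd hce hde _).mpr (Or.inl rfl))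
      · exact absurd hd hdt
      · exact Or.inr ((pt_lt_3half hbc hbd hbe hcd hce hde _).mpr (Or.inr rfl))
      · exact absurd hE hB
    · intro h
      have hle := (pt_bounds hbc hbd hbe hcd hce hde x).2
      have h' : pt n b c d e x < 1.5 := by rcases h with h | h <;> linarith
      rcases (pt_lt_3half hbc hbd hbe hcd hce hde x).mp h' with rfl | rfl
      · exact Or.inl ⟨rfl, hbt⟩
      · exact Or.inr (Or.inr (Or.inl ⟨rfl, hA⟩))
  by_cases hB : t.1 = {d, e}
  · have hdt : d ∈ t.1 := by rw [hB]; exact Finset.mem_insert_self d _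
    have hbt : b ∉ t.1 := by rw [hB]; exact hbde
    have hlo : loF a b c d e t = -1 := by rw [loF, if_neg hat, if_neg hA, if_neg hbt]
    have hhi : hiF a b c d e t = 8.5 := by rw [hiF, if_neg hat, if_pos hB]
    refine ⟨by rw [hlo], by rw [hlo]; norm_num, by rw [hhi], by rw [hhi]; norm_num, ?_⟩
    intro x
    rw [hlo, hhi]
    constructor
    · rintro (⟨rfl, hb⟩ | ⟨rfl, -⟩ | ⟨rfl, hE⟩ | ⟨rfl, -⟩)
      · exact absurd hb hbt
      · exact Or.inl ((pt_gt85 hbc hbd hbe hcd hce hde _).mpr (Or.inl rfl))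
      · exact absurd hE hA
      · exact Or.inl ((pt_gt85 hbc hbd hbe hcd hce hde _).mpr (Or.inr rfl))
    · intro h
      have hge := (pt_bounds hbc hbd hbe hcd hce hde x).1
      have h' : 8.5 < pt n b c d e x := by rcases h with h | h <;> linarith
      rcases (pt_gt85 hbc hbd hbe hcd hce hde x).mp h' with rfl | rfl
      · exact Or.inr (Or.inl ⟨rfl, hdt⟩)
      · exact Or.inr (Or.inr (Or.inr ⟨rfl, hB⟩))
  by_cases hbt : b ∈ t.1 <;> by_cases hdt : d ∈ t.1
  · -- t = {b, d}
    have hlo : loF a b c d e t = 0.5 := by rw [loF, if_neg hat, if_neg hA, if_pos hbt]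
    have hhi : hiF a b c d e t = 9.5 := by rw [hiF, if_neg hat, if_neg hB, if_pos hdt]
    refine ⟨by rw [hlo]; norm_num, by rw [hlo]; norm_num, by rw [hhi]; norm_num,
      by rw [hhi]; norm_num, ?_⟩
    intro x
    rw [hlo, hhi]
    constructor
    · rintro (⟨rfl, -⟩ | ⟨rfl, -⟩ | ⟨rfl, hE⟩ | ⟨rfl, hE⟩)
      · exact Or.inr ((pt_lt_half hbc hbd hbe hcd hce hde _).mpr rfl)
      · exact Or.inl ((pt_gt95 hbc hbd hbe hcd hce hde _).mpr rfl)
      · exact absurd hE hA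
      · exact absurd hE hB
    · rintro (h | h)
      · exact Or.inr (Or.inl ⟨(pt_gt95 hbc hbd hbe hcd hce hde x).mp h, hdt⟩)
      · exact Or.inl ⟨(pt_lt_half hbc hbd hbe hcd hce hde x).mp h, hbt⟩
  · have hlo : loF a b c d e t = 0.5 := by rw [loF, if_neg hat, if_neg hA, if_pos hbt]
    have hhi : hiF a b c d e t = 11 := by rw [hiF, if_neg hat, if_neg hB, if_neg hdt]
    refine ⟨by rw [hlo]; norm_num, by rw [hlo]; norm_num, by rw [hhi]; norm_num,
      by rw [hhi], ?_⟩
    intro x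
    rw [hlo, hhi]
    constructor
    · rintro (⟨rfl, -⟩ | ⟨rfl, hd⟩ | ⟨rfl, hE⟩ | ⟨rfl, hE⟩)
      · exact Or.inr ((pt_lt_half hbc hbd hbe hcd hce hde _).mpr rfl)
      · exact absurd hd hdt
      · exact absurd hE hA
      · exact absurd hE hB
    · intro h
      have hle := (pt_bounds hbc hbd hbe hcd hce hde x).2
      have h' : pt n b c d e x < 0.5 := by rcases h with h | h <;> linarith
      exact Or.inl ⟨(pt_lt_half hbc hbd hbe hcd hce hde x).mp h', hbt⟩
  · have hlo : loF a b c d e t = -1 := by rw [loF, if_neg hat, if_neg hA, if_neg hbt]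
    have hhi : hiF a b c d e t = 9.5 := by rw [hiF, if_neg hat, if_neg hB, if_pos hdt]
    refine ⟨by rw [hlo], by rw [hlo]; norm_num, by rw [hhi]; norm_num,
      by rw [hhi]; norm_num, ?_⟩
    intro x
    rw [hlo, hhi]
    constructor
    · rintro (⟨rfl, hb⟩ | ⟨rfl, -⟩ | ⟨rfl, hE⟩ | ⟨rfl, hE⟩)
      · exact absurd hb hbt
      · exact Or.inl ((pt_gt95 hbc hbd hbe hcd hce hde _).mpr rfl)
      · exact absurd hE hA
      · exact absurd hE hB
    · intro h
      have hge := (pt_bounds hbc hbd hbe hcd hce hde x).1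
      have h' : 9.5 < pt n b c d e x := by rcases h with h | h <;> linarith
      exact Or.inr (Or.inl ⟨(pt_gt95 hbc hbd hbe hcd hce hde x).mp h', hdt⟩)
  · have hlo : loF a b c d e t = -1 := by rw [loF, if_neg hat, if_neg hA, if_neg hbt]
    have hhi : hiF a b c d e t = 11 := by rw [hiF, if_neg hat, if_neg hB, if_neg hdt]
    refine ⟨by rw [hlo], by rw [hlo]; norm_num, by rw [hhi]; norm_num, by rw [hhi], ?_⟩
    intro x
    rw [hlo, hhi]
    constructor
    · rintro (⟨rfl, hb⟩ | ⟨rfl, hd⟩ | ⟨rfl, hE⟩ | ⟨rfl, hE⟩)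
      · exact absurd hb hbt
      · exact absurd hd hdt
      · exact absurd hE hA
      · exact absurd hE hB
    · intro h
      have hb1 := (pt_bounds hbc hbd hbe hcd hce hde x).1
      have hb2 := (pt_bounds hbc hbd hbe hcd hce hde x).2
      rcases h with h | h <;> linarith

end

end TypeA
namespace TypeA

variable {n : ℕ} {a b c d e : Fin n}

variable (hab : a ≠ b) (hac : a ≠ c) (had : a ≠ d) (hae : a ≠ e) (hbc : b ≠ c)
  (hbd : b ≠ d) (hbe : b ≠ e) (hcd : c ≠ d) (hce : c ≠ e) (hde : d ≠ e)

section
include hab hac had hae hbc hbd hbe hcd hce hde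

lemma crel_atoms {s t : Vn n} {x : Fin n} (hs : s.1 = {a, x}) :
    Crel b c d e s t ↔
      ((x = b ∧ b ∈ t.1) ∨ (x = d ∧ d ∈ t.1) ∨ (x = c ∧ t.1 = {b, c}) ∨
        (x = e ∧ t.1 = {d, e})) := by
  unfold Crel
  rw [hs]
  simp only [Finset.mem_insert, Finset.mem_singleton]
  constructor
  · rintro (⟨h1, h2⟩ | ⟨h1, h2⟩ | ⟨h1, h2⟩ | ⟨h1, h2⟩)
    · rcases h1 with h1 | h1
      · exact absurd h1.symm hab
      · exact Or.inl ⟨h1.symm, h2⟩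
    · rcases h1 with h1 | h1
      · exact absurd h1.symm had
      · exact Or.inr (Or.inl ⟨h1.symm, h2⟩)
    · rcases h1 with h1 | h1
      · exact absurd h1.symm hac
      · exact Or.inr (Or.inr (Or.inl ⟨h1.symm, h2⟩))
    · rcases h1 with h1 | h1
      · exact absurd h1.symm hae
      · exact Or.inr (Or.inr (Or.inr ⟨h1.symm, h2⟩))
  · rintro (⟨h1, h2⟩ | ⟨h1, h2⟩ | ⟨h1, h2⟩ | ⟨h1, h2⟩)
    · exact Or.inl ⟨Or.inr h1.symm, h2⟩
    · exact Or.inr (Or.inl ⟨Or.inr h1.symm, h2⟩)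
    · exact Or.inr (Or.inr (Or.inl ⟨Or.inr h1.symm, h2⟩))
    · exact Or.inr (Or.inr (Or.inr ⟨Or.inr h1.symm, h2⟩))

lemma interval_main (s t : Vn n) (hst : s ≠ t) :
    (Qv a ⊔ Dstar a b ⊔ Dstar a d ⊔ KU {a, b, c} ⊔ KU {a, d, e}).Adj s t ↔
      (hiF a b c d e t < loF a b c d e s ∨ hiF a b c d e s < loF a b c d e t) := by
  rw [adj_char hab hac had hae hbc hbd hbe hcd hce hde s t hst]
  by_cases has : a ∈ s.1 <;> by_cases hat : a ∈ t.1
  · obtain ⟨x, hxs, hxa⟩ := exists_other has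
    obtain ⟨y, hyt, hya⟩ := exists_other hat
    have hs := pair_eq has hxs (Ne.symm hxa)
    have ht := pair_eq hat hyt (Ne.symm hya)
    rw [loF_pair hxa hs, hiF_pair hxa hs, loF_pair hya ht, hiF_pair hya ht]
    have hxy : x ≠ y := by rintro rfl; exact hst (Subtype.ext (hs.trans ht.symm))
    have hne : pt n b c d e x ≠ pt n b c d e y :=
      fun h => hxy (pt_inj hbc hbd hbe hcd hce hde h)
    constructor
    · rintro -
      rcases hne.lt_or_gt with h | h
      · exact Or.inr h
      · exact Or.inl h
    · rintro -
      exact Or.inl ⟨has, hat⟩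
  · obtain ⟨x, hxs, hxa⟩ := exists_other has
    have hs := pair_eq has hxs (Ne.symm hxa)
    rw [loF_pair hxa hs, hiF_pair hxa hs]
    obtain ⟨-, -, -, -, hiff⟩ := classify hbc hbd hbe hcd hce hde t hat
    constructor
    · rintro (⟨-, h⟩ | ⟨-, -, hC⟩ | ⟨h, -⟩)
      · exact absurd h hat
      · exact (hiff x).mp ((crel_atoms hab hac had hae hbc hbd hbe hcd hce hde hs).mp hC)
      · exact absurd h hat
    · intro h
      exact Or.inr (Or.inl ⟨has, hat,
        (crel_atoms hab hac had hae hbc hbd hbe hcd hce hde hs).mpr ((hiff x).mpr h)⟩)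
  · obtain ⟨y, hyt, hya⟩ := exists_other hat
    have ht := pair_eq hat hyt (Ne.symm hya)
    rw [loF_pair hya ht, hiF_pair hya ht]
    obtain ⟨-, -, -, -, hiff⟩ := classify hbc hbd hbe hcd hce hde s has
    constructor
    · rintro (⟨h, -⟩ | ⟨h, -, -⟩ | ⟨-, -, hC⟩)
      · exact absurd h has
      · exact absurd h has
      · rcases (hiff y).mp
          ((crel_atoms hab hac had hae hbc hbd hbe hcd hce hde ht).mp hC) with h | h
        · exact Or.inr h
        · exact Or.inl h
    · intro h
      refine Or.inr (Or.inr ⟨hat, has,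
        (crel_atoms hab hac had hae hbc hbd hbe hcd hce hde ht).mpr ((hiff y).mpr ?_)⟩)
      rcases h with h | h
      · exact Or.inr h
      · exact Or.inl h
  · obtain ⟨hl1, hl2, hh1, hh2, -⟩ := classify hbc hbd hbe hcd hce hde s has
    obtain ⟨hl1', hl2', hh1', hh2', -⟩ := classify hbc hbd hbe hcd hce hde t hat
    constructor
    · rintro (⟨h, -⟩ | ⟨h, -⟩ | ⟨h, -⟩)
      · exact absurd h has
      · exact absurd h has
      · exact absurd h hat
    · rintro (h | h) <;> linarith

lemma is_interval :
    IsIntervalGraph (Qv a ⊔ Dstar a b ⊔ Dstar a d ⊔ KU {a, b, c} ⊔ KU {a, d, e})ᶜ := by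
  refine ⟨loF a b c d e, hiF a b c d e, fun s => loF_le_hiF s, fun u v huv => ?_⟩
  rw [SimpleGraph.compl_adj, Set.Icc_inter_Icc, Set.nonempty_Icc, sup_le_iff, le_inf_iff,
    le_inf_iff]
  rw [interval_main hab hac had hae hbc hbd hbe hcd hce hde u v huv]
  constructor
  · rintro ⟨-, hnadj⟩
    push_neg at hnadj
    exact ⟨⟨loF_le_hiF u, hnadj.1⟩, hnadj.2, loF_le_hiF v⟩
  · rintro ⟨⟨-, h1⟩, h2, -⟩
    exact ⟨huv, by push_neg; exact ⟨h1, h2⟩⟩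

end

end TypeA
namespace TypeA

variable {n : ℕ}

def vP (u v : Fin n) (h : u ≠ v) : Vn n := ⟨{u, v}, Finset.card_pair h⟩

lemma mem_ne {s t : Vn n} {u : Fin n} (hu : u ∈ s.1) (hnu : u ∉ t.1) : s ≠ t :=
  fun h => hnu (h ▸ hu)

def vA (a : Fin n) (x : {x : Fin n // x ≠ a}) : Vn n :=
  ⟨{a, x.1}, Finset.card_pair (Ne.symm x.2)⟩

lemma vA_inj {a : Fin n} : Function.Injective (vA a) := by
  intro x y h
  have h' : ({a, x.1} : Finset (Fin n)) = {a, y.1} := congrArg Subtype.val h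
  have hx : x.1 ∈ ({a, y.1} : Finset (Fin n)) := by rw [← h']; simp
  simp only [Finset.mem_insert, Finset.mem_singleton] at hx
  rcases hx with h1 | h1
  · exact absurd h1 x.2
  · exact Subtype.ext h1

def vB (a b : Fin n) (x : {x : Fin n // x ≠ a ∧ x ≠ b}) : Vn n :=
  ⟨{b, x.1}, Finset.card_pair (Ne.symm x.2.2)⟩

lemma vB_inj {a b : Fin n} : Function.Injective (vB a b) := by
  intro x y h
  have h' : ({b, x.1} : Finset (Fin n)) = {b, y.1} := congrArg Subtype.val h
  have hx : x.1 ∈ ({b, y.1} : Finset (Fin n)) := by rw [← h']; simp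
  simp only [Finset.mem_insert, Finset.mem_singleton] at hx
  rcases hx with h1 | h1
  · exact absurd h1 x.2.2
  · exact Subtype.ext h1

lemma card_ne_one (a : Fin n) : Fintype.card {x : Fin n // x ≠ a} = n - 1 := by
  rw [Fintype.card_subtype]
  have : (Finset.univ.filter fun x : Fin n => x ≠ a) = Finset.univ.erase a := by
    ext z; simp
  rw [this, Finset.card_erase_of_mem (Finset.mem_univ a), Finset.card_univ, Fintype.card_fin]

lemma card_ne_two {a b : Fin n} (hab : a ≠ b) :
    Fintype.card {x : Fin n // x ≠ a ∧ x ≠ b} = n - 2 := by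
  rw [Fintype.card_subtype]
  have : (Finset.univ.filter fun x : Fin n => x ≠ a ∧ x ≠ b) =
      Finset.univ \ {a, b} := by
    ext z; simp [not_or]
  rw [this, Finset.card_sdiff_of_subset (Finset.subset_univ _), Finset.card_univ, Fintype.card_fin,
    Finset.card_pair hab]

lemma ncard_top_edgeSet (α : Type*) [Fintype α] [DecidableEq α] :
    (⊤ : SimpleGraph α).edgeSet.ncard = (Fintype.card α).choose 2 := by
  classical
  rw [Set.ncard_eq_toFinset_card', Set.toFinset_card,
    ← SimpleGraph.edgeFinset_card, SimpleGraph.card_edgeFinset_top_eq_card_choose_two]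

variable {a b c d e : Fin n}

lemma count_edges (hn : 5 ≤ n) (hab : a ≠ b) (hac : a ≠ c) (had : a ≠ d) (hae : a ≠ e)
    (hbc : b ≠ c) (hbd : b ≠ d) (hbe : b ≠ e) (hcd : c ≠ d) (hce : c ≠ e) (hde : d ≠ e) :
    (Qv a ⊔ Dstar a b ⊔ Dstar a d ⊔ KU {a, b, c} ⊔ KU {a, d, e}).edgeSet.ncard =
      (n + 2) * (n - 1) / 2 := by
  classical
  set S1 : Set (Sym2 (Vn n)) :=
    Sym2.map (vA a) '' (⊤ : SimpleGraph {x : Fin n // x ≠ a}).edgeSet with hS1def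
  set S2 : Set (Sym2 (Vn n)) :=
    (fun x : {x : Fin n // x ≠ a ∧ x ≠ b} => s(vP a b hab, vB a b x)) '' Set.univ with hS2def
  set S3 : Set (Sym2 (Vn n)) :=
    (fun x : {x : Fin n // x ≠ a ∧ x ≠ d} => s(vP a d had, vB a d x)) '' Set.univ with hS3def
  set S4 : Set (Sym2 (Vn n)) := {s(vP a c hac, vP b c hbc)} with hS4def
  set S5 : Set (Sym2 (Vn n)) := {s(vP a e hae, vP d e hde)} with hS5def
  -- membership of a in the pieces
  have haB : ∀ x : {x : Fin n // x ≠ a ∧ x ≠ b}, a ∉ (vB a b x).1 := by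
    intro x; simp [vB, hab, Ne.symm x.2.1]
  have haD : ∀ x : {x : Fin n // x ≠ a ∧ x ≠ d}, a ∉ (vB a d x).1 := by
    intro x; simp [vB, had, Ne.symm x.2.1]
  have habc : a ∉ (vP b c hbc).1 := by simp [vP, hab, hac]
  have hade : a ∉ (vP d e hde).1 := by simp [vP, had, hae]
  have haP : ∀ (u v : Fin n) (h : u ≠ v), u ∈ (vP u v h).1 := by
    intro u v h; simp [vP]
  -- extraction lemmas
  have hS1elem : ∀ p ∈ S1, ∀ w ∈ p, a ∈ w.1 := by
    rintro p ⟨q, hq, rfl⟩ w hw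
    induction q using Sym2.ind with
    | _ x y =>
      rw [Sym2.map_pair_eq, Sym2.mem_iff] at hw
      rcases hw with rfl | rfl <;> simp [vA]
  have hS2elem : ∀ p ∈ S2, ∃ w : Vn n, p = s(vP a b hab, w) ∧ a ∉ w.1 := by
    rintro p ⟨x, -, rfl⟩; exact ⟨vB a b x, rfl, haB x⟩
  have hS3elem : ∀ p ∈ S3, ∃ w : Vn n, p = s(vP a d had, w) ∧ a ∉ w.1 := by
    rintro p ⟨x, -, rfl⟩; exact ⟨vB a d x, rfl, haD x⟩
  have hS4elem : ∀ p ∈ S4, ∃ w : Vn n, p = s(vP a c hac, w) ∧ a ∉ w.1 := by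
    rintro p rfl; exact ⟨vP b c hbc, rfl, habc⟩
  have hS5elem : ∀ p ∈ S5, ∃ w : Vn n, p = s(vP a e hae, w) ∧ a ∉ w.1 := by
    rintro p rfl; exact ⟨vP d e hde, rfl, hade⟩
  -- generic disjointness of "star" pieces
  have gen : ∀ (u1 w1 u2 w2 : Vn n), a ∈ u1.1 → a ∉ w1.1 → a ∈ u2.1 → a ∉ w2.1 →
      u1 ≠ u2 → s(u1, w1) ≠ s(u2, w2) := by
    intro u1 w1 u2 w2 h1 h2 h3 h4 hne hcontra
    rcases Sym2.eq_iff.mp hcontra with ⟨h5, -⟩ | ⟨h5, -⟩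
    · exact hne h5
    · exact h4 (h5 ▸ h1)
  have hvab_ne_vad : vP a b hab ≠ vP a d had := mem_ne (u := b) (by simp [vP]) (by simp [vP, Ne.symm hab, hbd])
  have hvab_ne_vac : vP a b hab ≠ vP a c hac := mem_ne (u := b) (by simp [vP]) (by simp [vP, Ne.symm hab, hbc])
  have hvab_ne_vae : vP a b hab ≠ vP a e hae := mem_ne (u := b) (by simp [vP]) (by simp [vP, Ne.symm hab, hbe])
  have hvad_ne_vac : vP a d had ≠ vP a c hac := mem_ne (u := d) (by simp [vP]) (by simp [vP, Ne.symm had, Ne.symm hcd])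
  have hvad_ne_vae : vP a d had ≠ vP a e hae := mem_ne (u := d) (by simp [vP]) (by simp [vP, Ne.symm had, hde])
  have hvac_ne_vae : vP a c hac ≠ vP a e hae := mem_ne (u := c) (by simp [vP]) (by simp [vP, Ne.symm hac, hce])
  -- the pieces are inside the edge set
  set G := Qv a ⊔ Dstar a b ⊔ Dstar a d ⊔ KU {a, b, c} ⊔ KU {a, d, e} with hGdef
  have hsub1 : S1 ⊆ G.edgeSet := by
    rintro p ⟨q, hq, rfl⟩
    induction q using Sym2.ind with
    | _ x y =>
      rw [SimpleGraph.mem_edgeSet] at hq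
      have hxy : x ≠ y := by simpa using hq
      have hne : vA a x ≠ vA a y := fun h => hxy (vA_inj h)
      rw [Sym2.map_pair_eq, SimpleGraph.mem_edgeSet, hGdef,
        adj_char hab hac had hae hbc hbd hbe hcd hce hde _ _ hne]
      exact Or.inl ⟨by simp [vA], by simp [vA]⟩
  have hsub2 : S2 ⊆ G.edgeSet := by
    rintro p ⟨x, -, rfl⟩
    have hne : vP a b hab ≠ vB a b x := mem_ne (u := a) (haP a b hab) (haB x)
    rw [SimpleGraph.mem_edgeSet, hGdef,
      adj_char hab hac had hae hbc hbd hbe hcd hce hde _ _ hne]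
    exact Or.inr (Or.inl ⟨haP a b hab, haB x, Or.inl ⟨by simp [vP], by simp [vB]⟩⟩)
  have hsub3 : S3 ⊆ G.edgeSet := by
    rintro p ⟨x, -, rfl⟩
    have hne : vP a d had ≠ vB a d x := mem_ne (u := a) (haP a d had) (haD x)
    rw [SimpleGraph.mem_edgeSet, hGdef,
      adj_char hab hac had hae hbc hbd hbe hcd hce hde _ _ hne]
    exact Or.inr (Or.inl ⟨haP a d had, haD x,
      Or.inr (Or.inl ⟨by simp [vP], by simp [vB]⟩)⟩)
  have hsub4 : S4 ⊆ G.edgeSet := by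
    rintro p rfl
    have hne : vP a c hac ≠ vP b c hbc := mem_ne (u := a) (haP a c hac) habc
    rw [SimpleGraph.mem_edgeSet, hGdef,
      adj_char hab hac had hae hbc hbd hbe hcd hce hde _ _ hne]
    exact Or.inr (Or.inl ⟨haP a c hac, habc,
      Or.inr (Or.inr (Or.inl ⟨by simp [vP], rfl⟩))⟩)
  have hsub5 : S5 ⊆ G.edgeSet := by
    rintro p rfl
    have hne : vP a e hae ≠ vP d e hde := mem_ne (u := a) (haP a e hae) hade
    rw [SimpleGraph.mem_edgeSet, hGdef,
      adj_char hab hac had hae hbc hbd hbe hcd hce hde _ _ hne]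
    exact Or.inr (Or.inl ⟨haP a e hae, hade,
      Or.inr (Or.inr (Or.inr ⟨by simp [vP], rfl⟩))⟩)
  -- the edge set equals the union
  have hEq : G.edgeSet = S1 ∪ S2 ∪ S3 ∪ S4 ∪ S5 := by
    apply Set.Subset.antisymm
    · intro p hp
      induction p using Sym2.ind with
      | _ u v =>
        rw [SimpleGraph.mem_edgeSet] at hp
        have hne : u ≠ v := hp.ne
        rw [hGdef, adj_char hab hac had hae hbc hbd hbe hcd hce hde u v hne] at hp
        have key : ∀ u v : Vn n, a ∈ u.1 → a ∉ v.1 → Crel b c d e u v →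
            s(u, v) ∈ S2 ∪ S3 ∪ S4 ∪ S5 := by
          intro u v hau hav hC
          rcases hC with ⟨hbu, hbv⟩ | ⟨hdu, hdv⟩ | ⟨hcu, hv⟩ | ⟨heu, hv⟩
          · left; left; left
            obtain ⟨y, hyv, hyb⟩ := exists_other hbv
            have hya : y ≠ a := fun h => hav (h ▸ hyv)
            refine ⟨⟨y, hya, hyb⟩, Set.mem_univ _, ?_⟩
            have h1 : vP a b hab = u := Subtype.ext (pair_eq hau hbu hab).symm
            have h2 : vB a b ⟨y, hya, hyb⟩ = v :=
              Subtype.ext (pair_eq hbv hyv (Ne.symm hyb)).symm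
            show s(vP a b hab, vB a b ⟨y, hya, hyb⟩) = s(u, v)
            rw [h1, h2]
          · left; left; right
            obtain ⟨y, hyv, hyd⟩ := exists_other hdv
            have hya : y ≠ a := fun h => hav (h ▸ hyv)
            refine ⟨⟨y, hya, hyd⟩, Set.mem_univ _, ?_⟩
            have h1 : vP a d had = u := Subtype.ext (pair_eq hau hdu had).symm
            have h2 : vB a d ⟨y, hya, hyd⟩ = v :=
              Subtype.ext (pair_eq hdv hyv (Ne.symm hyd)).symm
            show s(vP a d had, vB a d ⟨y, hya, hyd⟩) = s(u, v)
            rw [h1, h2]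
          · left; right
            have h1 : u = vP a c hac := Subtype.ext (pair_eq hau hcu hac)
            have h2 : v = vP b c hbc := Subtype.ext hv
            rw [h1, h2]
            exact rfl
          · right
            have h1 : u = vP a e hae := Subtype.ext (pair_eq hau heu hae)
            have h2 : v = vP d e hde := Subtype.ext hv
            rw [h1, h2]
            exact rfl
        rcases hp with ⟨hau, hav⟩ | ⟨hau, hav, hC⟩ | ⟨hav, hau, hC⟩
        · left; left; left; left
          obtain ⟨x, hxu, hxa⟩ := exists_other hau
          obtain ⟨y, hyv, hya⟩ := exists_other hav
          have hu : u = vA a ⟨x, hxa⟩ := Subtype.ext (pair_eq hau hxu (Ne.symm hxa))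
          have hv : v = vA a ⟨y, hya⟩ := Subtype.ext (pair_eq hav hyv (Ne.symm hya))
          refine ⟨s(⟨x, hxa⟩, ⟨y, hya⟩), ?_, ?_⟩
          · rw [SimpleGraph.mem_edgeSet, SimpleGraph.top_adj]
            intro hxy
            exact hne (by rw [hu, hv, hxy])
          · rw [Sym2.map_pair_eq, ← hu, ← hv]
        · rcases key u v hau hav hC with ((h | h) | h) | h
          · exact Or.inl (Or.inl (Or.inl (Or.inr h)))
          · exact Or.inl (Or.inl (Or.inr h))
          · exact Or.inl (Or.inr h)
          · exact Or.inr h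
        · rw [Sym2.eq_swap]
          rcases key v u hav hau hC with ((h | h) | h) | h
          · exact Or.inl (Or.inl (Or.inl (Or.inr h)))
          · exact Or.inl (Or.inl (Or.inr h))
          · exact Or.inl (Or.inr h)
          · exact Or.inr h
    · intro p hp
      rcases hp with (((h | h) | h) | h) | h
      exacts [hsub1 h, hsub2 h, hsub3 h, hsub4 h, hsub5 h]
  -- disjointness
  have hd1 : ∀ S : Set (Sym2 (Vn n)),
      (∀ p ∈ S, ∃ u w : Vn n, p = s(u, w) ∧ a ∉ w.1) → Disjoint S1 S := by
    intro S hS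
    rw [Set.disjoint_left]
    intro p hp1 hpS
    obtain ⟨u, w, rfl, hw⟩ := hS p hpS
    exact hw (hS1elem _ hp1 w (Sym2.mem_iff.mpr (Or.inr rfl)))
  have hd12 : Disjoint S1 S2 := hd1 S2 (fun p hp =>
    (hS2elem p hp).elim (fun w hw => ⟨_, w, hw.1, hw.2⟩))
  have hd13 : Disjoint S1 S3 := hd1 S3 (fun p hp =>
    (hS3elem p hp).elim (fun w hw => ⟨_, w, hw.1, hw.2⟩))
  have hd14 : Disjoint S1 S4 := hd1 S4 (fun p hp =>
    (hS4elem p hp).elim (fun w hw => ⟨_, w, hw.1, hw.2⟩))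
  have hd15 : Disjoint S1 S5 := hd1 S5 (fun p hp =>
    (hS5elem p hp).elim (fun w hw => ⟨_, w, hw.1, hw.2⟩))
  have hd23 : Disjoint S2 S3 := by
    rw [Set.disjoint_left]
    intro p hp2 hp3
    obtain ⟨w, rfl, hw⟩ := hS2elem p hp2
    obtain ⟨w', heq, hw'⟩ := hS3elem _ hp3
    exact gen _ _ _ _ (haP a b hab) hw (haP a d had) hw' hvab_ne_vad heq
  have hd24 : Disjoint S2 S4 := by
    rw [Set.disjoint_left]
    intro p hp2 hp3
    obtain ⟨w, rfl, hw⟩ := hS2elem p hp2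
    obtain ⟨w', heq, hw'⟩ := hS4elem _ hp3
    exact gen _ _ _ _ (haP a b hab) hw (haP a c hac) hw' hvab_ne_vac heq
  have hd25 : Disjoint S2 S5 := by
    rw [Set.disjoint_left]
    intro p hp2 hp3
    obtain ⟨w, rfl, hw⟩ := hS2elem p hp2
    obtain ⟨w', heq, hw'⟩ := hS5elem _ hp3
    exact gen _ _ _ _ (haP a b hab) hw (haP a e hae) hw' hvab_ne_vae heq
  have hd34 : Disjoint S3 S4 := by
    rw [Set.disjoint_left]
    intro p hp2 hp3
    obtain ⟨w, rfl, hw⟩ := hS3elem p hp2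
    obtain ⟨w', heq, hw'⟩ := hS4elem _ hp3
    exact gen _ _ _ _ (haP a d had) hw (haP a c hac) hw' hvad_ne_vac heq
  have hd35 : Disjoint S3 S5 := by
    rw [Set.disjoint_left]
    intro p hp2 hp3
    obtain ⟨w, rfl, hw⟩ := hS3elem p hp2
    obtain ⟨w', heq, hw'⟩ := hS5elem _ hp3
    exact gen _ _ _ _ (haP a d had) hw (haP a e hae) hw' hvad_ne_vae heq
  have hd45 : Disjoint S4 S5 := by
    rw [Set.disjoint_left]
    intro p hp2 hp3
    obtain ⟨w, rfl, hw⟩ := hS4elem p hp2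
    obtain ⟨w', heq, hw'⟩ := hS5elem _ hp3
    exact gen _ _ _ _ (haP a c hac) hw (haP a e hae) hw' hvac_ne_vae heq
  have hdA : Disjoint (S1 ∪ S2) S3 := Set.disjoint_union_left.mpr ⟨hd13, hd23⟩
  have hdB : Disjoint (S1 ∪ S2 ∪ S3) S4 :=
    Set.disjoint_union_left.mpr ⟨Set.disjoint_union_left.mpr ⟨hd14, hd24⟩, hd34⟩
  have hdC : Disjoint (S1 ∪ S2 ∪ S3 ∪ S4) S5 :=
    Set.disjoint_union_left.mpr ⟨Set.disjoint_union_left.mpr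
      ⟨Set.disjoint_union_left.mpr ⟨hd15, hd25⟩, hd35⟩, hd45⟩
  -- cardinalities of the pieces
  have hf2inj : Function.Injective
      (fun x : {x : Fin n // x ≠ a ∧ x ≠ b} => s(vP a b hab, vB a b x)) := by
    intro x y h
    rcases Sym2.eq_iff.mp h with ⟨-, h2⟩ | ⟨h1, -⟩
    · exact vB_inj h2
    · exact absurd h1 (mem_ne (u := a) (haP a b hab) (haB y))
  have hf3inj : Function.Injective
      (fun x : {x : Fin n // x ≠ a ∧ x ≠ d} => s(vP a d had, vB a d x)) := by
    intro x y h
    rcases Sym2.eq_iff.mp h with ⟨-, h2⟩ | ⟨h1, -⟩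
    · exact vB_inj h2
    · exact absurd h1 (mem_ne (u := a) (haP a d had) (haD y))
  have c1 : S1.ncard = (n - 1).choose 2 := by
    rw [hS1def, Set.ncard_image_of_injective _ (Sym2.map.injective vA_inj),
      ncard_top_edgeSet, card_ne_one]
  have c2 : S2.ncard = n - 2 := by
    rw [hS2def, Set.ncard_image_of_injective _ hf2inj, Set.ncard_univ,
      Nat.card_eq_fintype_card, card_ne_two hab]
  have c3 : S3.ncard = n - 2 := by
    rw [hS3def, Set.ncard_image_of_injective _ hf3inj, Set.ncard_univ,
      Nat.card_eq_fintype_card, card_ne_two had]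
  have c4 : S4.ncard = 1 := Set.ncard_singleton _
  have c5 : S5.ncard = 1 := Set.ncard_singleton _
  rw [hEq, Set.ncard_union_eq hdC (Set.toFinite _) (Set.toFinite _),
    Set.ncard_union_eq hdB (Set.toFinite _) (Set.toFinite _),
    Set.ncard_union_eq hdA (Set.toFinite _) (Set.toFinite _),
    Set.ncard_union_eq hd12 (Set.toFinite _) (Set.toFinite _),
    c1, c2, c3, c4, c5]
  -- arithmetic
  obtain ⟨m, rfl⟩ : ∃ m, n = m + 5 := ⟨n - 5, by omega⟩
  rw [Nat.choose_two_right]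
  have e1 : m + 5 - 1 = m + 4 := by omega
  have e2 : m + 5 - 2 = m + 3 := by omega
  have e3 : m + 4 - 1 = m + 3 := by omega
  rw [e1, e2, e3]
  rcases Nat.even_or_odd m with ⟨j, rfl⟩ | ⟨j, rfl⟩
  · rw [show (j + j + 4) * (j + j + 3) = 2 * ((j + 2) * (j + j + 3)) from by ring,
      show (j + j + 5 + 2) * (j + j + 4) = 2 * ((j + j + 7) * (j + 2)) from by ring,
      Nat.mul_div_cancel_left _ (by norm_num : 0 < 2),
      Nat.mul_div_cancel_left _ (by norm_num : 0 < 2)]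
    ring
  · rw [show (2 * j + 1 + 4) * (2 * j + 1 + 3) = 2 * ((2 * j + 5) * (j + 2)) from by ring,
      show (2 * j + 1 + 5 + 2) * (2 * j + 1 + 4) = 2 * ((j + 4) * (2 * j + 5)) from by ring,
      Nat.mul_div_cancel_left _ (by norm_num : 0 < 2),
      Nat.mul_div_cancel_left _ (by norm_num : 0 < 2)]
    ring

end TypeA

/-- The subgraph of `L(K_n)` with edge set `E_{a,b,c,d,e}` is an interval-order graph with
`(n+2)(n-1)/2` edges. -/
theorem type_a_interval_order (n : ℕ) (hn : 5 ≤ n) (a b c d e : Fin n)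
    (hdist : ([a, b, c, d, e] : List (Fin n)).Nodup) :
    IsIntervalGraph (Qv a ⊔ Dstar a b ⊔ Dstar a d ⊔ KU {a, b, c} ⊔ KU {a, d, e})ᶜ ∧
    (Qv a ⊔ Dstar a b ⊔ Dstar a d ⊔ KU {a, b, c} ⊔ KU {a, d, e}).edgeSet.ncard =
      (n + 2) * (n - 1) / 2 := by
  simp only [List.nodup_cons, List.mem_cons, List.mem_singleton, List.not_mem_nil, or_false,
    not_or, List.nodup_nil, and_true] at hdist
  obtain ⟨⟨hab, hac, had, hae⟩, ⟨hbc, hbd, hbe⟩, ⟨hcd, hce⟩, ⟨hde, -⟩⟩ := hdist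
  exact ⟨TypeA.is_interval hab hac had hae hbc hbd hbe hcd hce hde,
    TypeA.count_edges hn hab hac had hae hbc hbd hbe hcd hce hde⟩
end

section
/- For n ≥ 5 and distinct vertices a,b,c,d of K_n, the subgraph of L(K_n) with edge set E_{a,b,c,d} = δ_{ab} ∪ δ_{ad} ∪ K_{{a,b,c,d}} is an interval-order graph and has exactly 4(n-1) edges. -/
open SimpleGraph

lemma adj_char {n : ℕ} (a b c d : Fin n)
    (e f : {s : Finset (Fin n) // s.card = 2}) :
    (Dstar a b ⊔ Dstar a d ⊔ KU {a, b, c, d}).Adj e f ↔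
      e ≠ f ∧ ¬ Disjoint e.1 f.1 ∧
      (e.1 = {a,b} ∨ f.1 = {a,b} ∨ e.1 = {a,d} ∨ f.1 = {a,d} ∨
        (e.1 ⊆ ({a,b,c,d} : Finset (Fin n)) ∧ f.1 ⊆ ({a,b,c,d} : Finset (Fin n)))) := by
  simp only [SimpleGraph.sup_adj, Dstar, KU, SimpleGraph.fromRel_adj]
  constructor
  · rintro (⟨⟨h1,(⟨h2,h3⟩|⟨h2,h3⟩)⟩|⟨h1,(⟨h2,h3⟩|⟨h2,h3⟩)⟩⟩|⟨h1,(⟨h2,h3,h4⟩|⟨h2,h3,h4⟩)⟩) <;>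
      refine ⟨h1, ?_, ?_⟩ <;> first
        | (intro hd; exact h3 hd.symm)
        | exact ‹_›
        | tauto
  · rintro ⟨h1, h2, (h|h|h|h|⟨h,h'⟩)⟩
    · exact Or.inl (Or.inl ⟨h1, Or.inl ⟨h, h2⟩⟩)
    · exact Or.inl (Or.inl ⟨h1, Or.inr ⟨h, fun hd => h2 hd.symm⟩⟩)
    · exact Or.inl (Or.inr ⟨h1, Or.inl ⟨h, h2⟩⟩)
    · exact Or.inl (Or.inr ⟨h1, Or.inr ⟨h, fun hd => h2 hd.symm⟩⟩)
    · exact Or.inr ⟨h1, Or.inl ⟨h, h', h2⟩⟩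

lemma pair_eq {n : ℕ} (e : {s : Finset (Fin n) // s.card = 2}) {x y : Fin n}
    (hx : x ∈ e.1) (hy : y ∈ e.1) (hxy : x ≠ y) : e.1 = {x, y} := by
  refine (Finset.eq_of_subset_of_card_le ?_ ?_).symm
  · intro z hz
    rw [Finset.mem_insert, Finset.mem_singleton] at hz
    rcases hz with h|h <;> subst h <;> assumption
  · rw [e.2, Finset.card_pair hxy]

lemma exists_other {n : ℕ} (e : {s : Finset (Fin n) // s.card = 2}) {x : Fin n}
    (hx : x ∈ e.1) : ∃ y, y ≠ x ∧ e.1 = {x, y} := by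
  have h2 := e.2
  obtain ⟨u, v, huv, h⟩ := Finset.card_eq_two.mp h2
  rw [h] at hx; simp at hx
  rcases hx with rfl|rfl
  · exact ⟨v, huv.symm, h⟩
  · exact ⟨u, huv, by rw [h, Finset.pair_comm]⟩

lemma two_of_four {n : ℕ} (a b c d : Fin n) (e : {s : Finset (Fin n) // s.card = 2})
    (h : e.1 ⊆ {a, b, c, d}) :
    (a ∈ e.1 ∧ b ∈ e.1) ∨ (a ∈ e.1 ∧ c ∈ e.1) ∨ (a ∈ e.1 ∧ d ∈ e.1) ∨
    (b ∈ e.1 ∧ c ∈ e.1) ∨ (b ∈ e.1 ∧ d ∈ e.1) ∨ (c ∈ e.1 ∧ d ∈ e.1) := by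
  obtain ⟨u, v, huv, he⟩ := Finset.card_eq_two.mp e.2
  have hu : u ∈ e.1 := by rw [he]; simp
  have hv : v ∈ e.1 := by rw [he]; simp
  have h1 := h hu; have h2 := h hv
  simp only [Finset.mem_insert, Finset.mem_singleton] at h1 h2
  rcases h1 with rfl|rfl|rfl|rfl <;> rcases h2 with rfl|rfl|rfl|rfl <;> tauto

lemma pair_ne_l {n : ℕ} {x y z w : Fin n} (h1 : x ≠ z) (h2 : x ≠ w) :
    ({x, y} : Finset (Fin n)) ≠ {z, w} := by
  intro h
  have : x ∈ ({z, w} : Finset (Fin n)) := h ▸ (by simp)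
  simp only [Finset.mem_insert, Finset.mem_singleton] at this
  tauto

lemma pair_ne_r {n : ℕ} {x y z w : Fin n} (h1 : y ≠ z) (h2 : y ≠ w) :
    ({x, y} : Finset (Fin n)) ≠ {z, w} := by
  intro h
  have : y ∈ ({z, w} : Finset (Fin n)) := h ▸ (by simp)
  simp only [Finset.mem_insert, Finset.mem_singleton] at this
  tauto

lemma classify {n : ℕ} {a b c d : Fin n} (hab : a ≠ b) (hac : a ≠ c) (had : a ≠ d)
    (hbc : b ≠ c) (hbd : b ≠ d) (hcd : c ≠ d) (e : {s : Finset (Fin n) // s.card = 2}) :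
    e.1 = {a,b} ∨ e.1 = {a,d} ∨ e.1 = {a,c} ∨ e.1 = {b,d} ∨ e.1 = {b,c} ∨ e.1 = {c,d} ∨
    (a ∈ e.1 ∧ b ∉ e.1 ∧ c ∉ e.1 ∧ d ∉ e.1) ∨
    (b ∈ e.1 ∧ a ∉ e.1 ∧ c ∉ e.1 ∧ d ∉ e.1) ∨
    (d ∈ e.1 ∧ a ∉ e.1 ∧ b ∉ e.1 ∧ c ∉ e.1) ∨
    (a ∉ e.1 ∧ b ∉ e.1 ∧ d ∉ e.1) := by
  by_cases ha : a ∈ e.1 <;> by_cases hb : b ∈ e.1 <;> by_cases hc : c ∈ e.1 <;>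
    by_cases hd : d ∈ e.1 <;>
    first
      | exact Or.inl (pair_eq e ha hb hab)
      | exact Or.inr (Or.inl (pair_eq e ha hd had))
      | exact Or.inr (Or.inr (Or.inl (pair_eq e ha hc hac)))
      | exact Or.inr (Or.inr (Or.inr (Or.inl (pair_eq e hb hd hbd))))
      | exact Or.inr (Or.inr (Or.inr (Or.inr (Or.inl (pair_eq e hb hc hbc)))))
      | exact Or.inr (Or.inr (Or.inr (Or.inr (Or.inr (Or.inl (pair_eq e hc hd hcd))))))
      | tauto

def loF {n : ℕ} (a b c d : Fin n) (e : {s : Finset (Fin n) // s.card = 2}) : ℝ :=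
  if e.1 = {a,b} then 0 else if e.1 = {a,d} then 10 else if e.1 = {a,c} then 2
  else if e.1 = {b,d} then 3 else if e.1 = {b,c} then 9 else if e.1 = {c,d} then -1
  else if a ∈ e.1 then 1 else if b ∈ e.1 then 1 else -10

def hiF {n : ℕ} (a b c d : Fin n) (e : {s : Finset (Fin n) // s.card = 2}) : ℝ :=
  if e.1 = {a,b} then 0 else if e.1 = {a,d} then 10 else if e.1 = {a,c} then 8
  else if e.1 = {b,d} then 7 else if e.1 = {b,c} then 11 else if e.1 = {c,d} then 1
  else if a ∈ e.1 then 9 else if b ∈ e.1 then 20 else if d ∈ e.1 then 9 else 20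

lemma spec {n : ℕ} {a b c d : Fin n} (hab : a ≠ b) (hac : a ≠ c) (had : a ≠ d)
    (hbc : b ≠ c) (hbd : b ≠ d) (hcd : c ≠ d) (e : {s : Finset (Fin n) // s.card = 2}) :
    (e.1 = {a,b} ∧ e.1 ⊆ {a,b,c,d} ∧ loF a b c d e = 0 ∧ hiF a b c d e = 0) ∨
    (e.1 = {a,d} ∧ e.1 ⊆ {a,b,c,d} ∧ loF a b c d e = 10 ∧ hiF a b c d e = 10) ∨
    (e.1 = {a,c} ∧ e.1 ≠ {a,b} ∧ e.1 ≠ {a,d} ∧ e.1 ⊆ {a,b,c,d} ∧ loF a b c d e = 2 ∧ hiF a b c d e = 8) ∨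
    (e.1 = {b,d} ∧ e.1 ≠ {a,b} ∧ e.1 ≠ {a,d} ∧ e.1 ⊆ {a,b,c,d} ∧ loF a b c d e = 3 ∧ hiF a b c d e = 7) ∨
    (e.1 = {b,c} ∧ e.1 ≠ {a,b} ∧ e.1 ≠ {a,d} ∧ e.1 ⊆ {a,b,c,d} ∧ loF a b c d e = 9 ∧ hiF a b c d e = 11) ∨
    (e.1 = {c,d} ∧ e.1 ≠ {a,b} ∧ e.1 ≠ {a,d} ∧ e.1 ⊆ {a,b,c,d} ∧ loF a b c d e = -1 ∧ hiF a b c d e = 1) ∨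
    (a ∈ e.1 ∧ b ∉ e.1 ∧ c ∉ e.1 ∧ d ∉ e.1 ∧ e.1 ≠ {a,b} ∧ e.1 ≠ {a,d} ∧ ¬ e.1 ⊆ {a,b,c,d} ∧ loF a b c d e = 1 ∧ hiF a b c d e = 9) ∨
    (b ∈ e.1 ∧ a ∉ e.1 ∧ c ∉ e.1 ∧ d ∉ e.1 ∧ e.1 ≠ {a,b} ∧ e.1 ≠ {a,d} ∧ ¬ e.1 ⊆ {a,b,c,d} ∧ loF a b c d e = 1 ∧ hiF a b c d e = 20) ∨
    (d ∈ e.1 ∧ a ∉ e.1 ∧ b ∉ e.1 ∧ c ∉ e.1 ∧ e.1 ≠ {a,b} ∧ e.1 ≠ {a,d} ∧ ¬ e.1 ⊆ {a,b,c,d} ∧ loF a b c d e = -10 ∧ hiF a b c d e = 9) ∨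
    (a ∉ e.1 ∧ b ∉ e.1 ∧ d ∉ e.1 ∧ e.1 ≠ {a,b} ∧ e.1 ≠ {a,d} ∧ ¬ e.1 ⊆ {a,b,c,d} ∧ loF a b c d e = -10 ∧ hiF a b c d e = 20) := by
  have hUab : ({a,b} : Finset (Fin n)) ⊆ {a,b,c,d} := by intro x hx; simp at hx ⊢; tauto
  have hUad : ({a,d} : Finset (Fin n)) ⊆ {a,b,c,d} := by intro x hx; simp at hx ⊢; tauto
  have hUac : ({a,c} : Finset (Fin n)) ⊆ {a,b,c,d} := by intro x hx; simp at hx ⊢; tauto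
  have hUbd : ({b,d} : Finset (Fin n)) ⊆ {a,b,c,d} := by intro x hx; simp at hx ⊢; tauto
  have hUbc : ({b,c} : Finset (Fin n)) ⊆ {a,b,c,d} := by intro x hx; simp at hx ⊢; tauto
  have hUcd : ({c,d} : Finset (Fin n)) ⊆ {a,b,c,d} := by intro x hx; simp at hx ⊢; tauto
  have n1 : ({a,d} : Finset (Fin n)) ≠ {a,b} := pair_ne_r had.symm hbd.symm
  have n2 : ({a,c} : Finset (Fin n)) ≠ {a,b} := pair_ne_r hac.symm hbc.symm
  have n3 : ({a,c} : Finset (Fin n)) ≠ {a,d} := pair_ne_r hac.symm hcd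
  have n4 : ({b,d} : Finset (Fin n)) ≠ {a,b} := pair_ne_r had.symm hbd.symm
  have n5 : ({b,d} : Finset (Fin n)) ≠ {a,d} := pair_ne_l hab.symm hbd
  have n6 : ({b,d} : Finset (Fin n)) ≠ {a,c} := pair_ne_l hab.symm hbc
  have n7 : ({b,c} : Finset (Fin n)) ≠ {a,b} := pair_ne_r hac.symm hbc.symm
  have n8 : ({b,c} : Finset (Fin n)) ≠ {a,d} := pair_ne_l hab.symm hbd
  have n9 : ({b,c} : Finset (Fin n)) ≠ {a,c} := pair_ne_l hab.symm hbc
  have n10 : ({b,c} : Finset (Fin n)) ≠ {b,d} := pair_ne_r hbc.symm hcd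
  have n11 : ({c,d} : Finset (Fin n)) ≠ {a,b} := pair_ne_l hac.symm hbc.symm
  have n12 : ({c,d} : Finset (Fin n)) ≠ {a,d} := pair_ne_l hac.symm hcd
  have n13 : ({c,d} : Finset (Fin n)) ≠ {a,c} := pair_ne_r had.symm hcd.symm
  have n14 : ({c,d} : Finset (Fin n)) ≠ {b,d} := pair_ne_l hbc.symm hcd
  have n15 : ({c,d} : Finset (Fin n)) ≠ {b,c} := pair_ne_r hbd.symm hcd.symm
  rcases classify hab hac had hbc hbd hcd e with
    h|h|h|h|h|h|⟨h1,h2,h3,h4⟩|⟨h1,h2,h3,h4⟩|⟨h1,h2,h3,h4⟩|⟨h1,h2,h3⟩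
  · exact Or.inl ⟨h, by rw [h]; exact hUab, by simp [loF, h], by simp [hiF, h]⟩
  · refine Or.inr (Or.inl ⟨h, by rw [h]; exact hUad, ?_, ?_⟩) <;>
      simp [loF, hiF, h, n1]
  · refine Or.inr (Or.inr (Or.inl ⟨h, by rw [h]; exact n2, by rw [h]; exact n3,
      by rw [h]; exact hUac, ?_, ?_⟩)) <;> simp [loF, hiF, h, n2, n3]
  · refine Or.inr (Or.inr (Or.inr (Or.inl ⟨h, by rw [h]; exact n4, by rw [h]; exact n5,
      by rw [h]; exact hUbd, ?_, ?_⟩))) <;> simp [loF, hiF, h, n4, n5, n6]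
  · refine Or.inr (Or.inr (Or.inr (Or.inr (Or.inl ⟨h, by rw [h]; exact n7,
      by rw [h]; exact n8, by rw [h]; exact hUbc, ?_, ?_⟩)))) <;>
      simp [loF, hiF, h, n7, n8, n9, n10]
  · refine Or.inr (Or.inr (Or.inr (Or.inr (Or.inr (Or.inl ⟨h, by rw [h]; exact n11,
      by rw [h]; exact n12, by rw [h]; exact hUcd, ?_, ?_⟩))))) <;>
      simp [loF, hiF, h, n11, n12, n13, n14, n15]
  · have e1 : e.1 ≠ {a,b} := fun hh => h2 (by rw [hh]; simp)
    have e2 : e.1 ≠ {a,d} := fun hh => h4 (by rw [hh]; simp)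
    have e3 : e.1 ≠ {a,c} := fun hh => h3 (by rw [hh]; simp)
    have e4 : e.1 ≠ {b,d} := fun hh => h2 (by rw [hh]; simp)
    have e5 : e.1 ≠ {b,c} := fun hh => h2 (by rw [hh]; simp)
    have e6 : e.1 ≠ {c,d} := fun hh => h3 (by rw [hh]; simp)
    have hns : ¬ e.1 ⊆ {a,b,c,d} := fun hs => by
      have := two_of_four a b c d e hs; tauto
    refine Or.inr (Or.inr (Or.inr (Or.inr (Or.inr (Or.inr (Or.inl
      ⟨h1, h2, h3, h4, e1, e2, hns, ?_, ?_⟩)))))) <;>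
      simp [loF, hiF, e1, e2, e3, e4, e5, e6, h1]
  · have e1 : e.1 ≠ {a,b} := fun hh => h2 (by rw [hh]; simp)
    have e2 : e.1 ≠ {a,d} := fun hh => h2 (by rw [hh]; simp)
    have e3 : e.1 ≠ {a,c} := fun hh => h2 (by rw [hh]; simp)
    have e4 : e.1 ≠ {b,d} := fun hh => h4 (by rw [hh]; simp)
    have e5 : e.1 ≠ {b,c} := fun hh => h3 (by rw [hh]; simp)
    have e6 : e.1 ≠ {c,d} := fun hh => h3 (by rw [hh]; simp)
    have hns : ¬ e.1 ⊆ {a,b,c,d} := fun hs => by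
      have := two_of_four a b c d e hs; tauto
    refine Or.inr (Or.inr (Or.inr (Or.inr (Or.inr (Or.inr (Or.inr (Or.inl
      ⟨h1, h2, h3, h4, e1, e2, hns, ?_, ?_⟩))))))) <;>
      simp [loF, hiF, e1, e2, e3, e4, e5, e6, h1, h2]
  · have e1 : e.1 ≠ {a,b} := fun hh => h2 (by rw [hh]; simp)
    have e2 : e.1 ≠ {a,d} := fun hh => h2 (by rw [hh]; simp)
    have e3 : e.1 ≠ {a,c} := fun hh => h2 (by rw [hh]; simp)
    have e4 : e.1 ≠ {b,d} := fun hh => h3 (by rw [hh]; simp)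
    have e5 : e.1 ≠ {b,c} := fun hh => h3 (by rw [hh]; simp)
    have e6 : e.1 ≠ {c,d} := fun hh => h4 (by rw [hh]; simp)
    have hns : ¬ e.1 ⊆ {a,b,c,d} := fun hs => by
      have := two_of_four a b c d e hs; tauto
    refine Or.inr (Or.inr (Or.inr (Or.inr (Or.inr (Or.inr (Or.inr (Or.inr (Or.inl
      ⟨h1, h2, h3, h4, e1, e2, hns, ?_, ?_⟩)))))))) <;>
      simp [loF, hiF, e1, e2, e3, e4, e5, e6, h1, h2, h3]
  · have e1 : e.1 ≠ {a,b} := fun hh => h1 (by rw [hh]; simp)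
    have e2 : e.1 ≠ {a,d} := fun hh => h1 (by rw [hh]; simp)
    have e3 : e.1 ≠ {a,c} := fun hh => h1 (by rw [hh]; simp)
    have e4 : e.1 ≠ {b,d} := fun hh => h2 (by rw [hh]; simp)
    have e5 : e.1 ≠ {b,c} := fun hh => h2 (by rw [hh]; simp)
    have e6 : e.1 ≠ {c,d} := fun hh => h3 (by rw [hh]; simp)
    have hns : ¬ e.1 ⊆ {a,b,c,d} := fun hs => by
      have := two_of_four a b c d e hs; tauto
    refine Or.inr (Or.inr (Or.inr (Or.inr (Or.inr (Or.inr (Or.inr (Or.inr (Or.inr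
      ⟨h1, h2, h3, e1, e2, hns, ?_, ?_⟩)))))))) <;>
      simp [loF, hiF, e1, e2, e3, e4, e5, e6, h1, h2, h3]

set_option maxHeartbeats 4000000 in
lemma adj_iff_num {n : ℕ} {a b c d : Fin n} (hab : a ≠ b) (hac : a ≠ c) (had : a ≠ d)
    (hbc : b ≠ c) (hbd : b ≠ d) (hcd : c ≠ d) (u v : {s : Finset (Fin n) // s.card = 2})
    (huv : u ≠ v) :
    (¬ Disjoint u.1 v.1 ∧ (u.1 = {a,b} ∨ v.1 = {a,b} ∨ u.1 = {a,d} ∨ v.1 = {a,d} ∨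
      (u.1 ⊆ ({a,b,c,d} : Finset (Fin n)) ∧ v.1 ⊆ ({a,b,c,d} : Finset (Fin n))))) ↔
    ¬ (max (loF a b c d u) (loF a b c d v) ≤ min (hiF a b c d u) (hiF a b c d v)) := by
  have hne : u.1 ≠ v.1 := fun h => huv (Subtype.ext h)
  rcases spec hab hac had hbc hbd hcd u with
      ⟨hu,hsu,hl1,hh1⟩|⟨hu,hsu,hl1,hh1⟩|⟨hu,hne1,hne2,hsu,hl1,hh1⟩|⟨hu,hne1,hne2,hsu,hl1,hh1⟩|
      ⟨hu,hne1,hne2,hsu,hl1,hh1⟩|⟨hu,hne1,hne2,hsu,hl1,hh1⟩|⟨hM,hN1,hN2,hN3,hne1,hne2,hns,hl1,hh1⟩|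
      ⟨hM,hN1,hN2,hN3,hne1,hne2,hns,hl1,hh1⟩|⟨hM,hN1,hN2,hN3,hne1,hne2,hns,hl1,hh1⟩|
      ⟨hN1,hN2,hN3,hne1,hne2,hns,hl1,hh1⟩ <;>
    rcases spec hab hac had hbc hbd hcd v with
      ⟨hu',hsu',hl2,hh2⟩|⟨hu',hsu',hl2,hh2⟩|⟨hu',hne1',hne2',hsu',hl2,hh2⟩|⟨hu',hne1',hne2',hsu',hl2,hh2⟩|
      ⟨hu',hne1',hne2',hsu',hl2,hh2⟩|⟨hu',hne1',hne2',hsu',hl2,hh2⟩|⟨hM',hN1',hN2',hN3',hne1',hne2',hns',hl2,hh2⟩|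
      ⟨hM',hN1',hN2',hN3',hne1',hne2',hns',hl2,hh2⟩|⟨hM',hN1',hN2',hN3',hne1',hne2',hns',hl2,hh2⟩|
      ⟨hN1',hN2',hN3',hne1',hne2',hns',hl2,hh2⟩ <;>
    rw [hl1, hh1, hl2, hh2] <;>
    first
      | exact absurd (hu.trans hu'.symm) hne
      | (refine iff_of_true ⟨Finset.not_disjoint_iff.2 ?_, ?_⟩ ?_
         · first | (refine ⟨a, ?_, ?_⟩ <;> (first | exact hM | exact hM' | (rw [hu]; first | exact Finset.mem_insert_self _ _ | exact Finset.mem_insert_of_mem (Finset.mem_singleton_self _)) | (rw [hu']; first | exact Finset.mem_insert_self _ _ | exact Finset.mem_insert_of_mem (Finset.mem_singleton_self _)))) | (refine ⟨b, ?_, ?_⟩ <;> (first | exact hM | exact hM' | (rw [hu]; first | exact Finset.mem_insert_self _ _ | exact Finset.mem_insert_of_mem (Finset.mem_singleton_self _)) | (rw [hu']; first | exact Finset.mem_insert_self _ _ | exact Finset.mem_insert_of_mem (Finset.mem_singleton_self _)))) | (refine ⟨c, ?_, ?_⟩ <;> (first | exact hM | exact hM' | (rw [hu]; first | exact Finset.mem_insert_self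 _ _ | exact Finset.mem_insert_of_mem (Finset.mem_singleton_self _)) | (rw [hu']; first | exact Finset.mem_insert_self _ _ | exact Finset.mem_insert_of_mem (Finset.mem_singleton_self _)))) | (refine ⟨d, ?_, ?_⟩ <;> (first | exact hM | exact hM' | (rw [hu]; first | exact Finset.mem_insert_self _ _ | exact Finset.mem_insert_of_mem (Finset.mem_singleton_self _)) | (rw [hu']; first | exact Finset.mem_insert_self _ _ | exact Finset.mem_insert_of_mem (Finset.mem_singleton_self _))))
         · first | exact Or.inl hu | exact Or.inr (Or.inl hu') | exact Or.inr (Or.inr (Or.inl hu)) | exact Or.inr (Or.inr (Or.inr (Or.inl hu'))) | exact Or.inr (Or.inr (Or.inr (Or.inr ⟨hsu, hsu'⟩)))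
         · norm_num)
      | (refine iff_of_false ?_ ?_
         · rintro ⟨hnd, hor⟩
           first
             | (rcases hor with h|h|h|h|⟨h1,h2⟩ <;> first | exact hne1 h | exact hne1' h | exact hne2 h | exact hne2' h | exact hns h1 | exact hns' h2)
             | (apply hnd; rw [hu, hu']; simp [Finset.disjoint_insert_left, Finset.disjoint_singleton_left, hab, hac, had, hbc, hbd, hcd, hab.symm, hac.symm, had.symm, hbc.symm, hbd.symm, hcd.symm])
             | (apply hnd; rw [hu]; simp only [Finset.disjoint_insert_left, Finset.disjoint_singleton_left]; constructor <;> assumption)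
             | (apply hnd; apply Disjoint.symm; rw [hu']; simp only [Finset.disjoint_insert_left, Finset.disjoint_singleton_left]; constructor <;> assumption)
         · simp only [not_not]
           norm_num)

open Finset in
def vAB {n : ℕ} (x y : Fin n) (h : x ≠ y) : {s : Finset (Fin n) // s.card = 2} :=
  ⟨{x, y}, Finset.card_pair h⟩

def pe {n : ℕ} (x y : Fin n) (dflt : {s : Finset (Fin n) // s.card = 2}) :
    {s : Finset (Fin n) // s.card = 2} :=
  if h : x = y then dflt else ⟨{x, y}, Finset.card_pair h⟩

lemma pe_val {n : ℕ} {x y : Fin n} (h : x ≠ y) (dflt : {s : Finset (Fin n) // s.card = 2}) :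
    (pe x y dflt).1 = {x, y} := by simp [pe, h]

open Finset in
def ES {n : ℕ} (a b c d : Fin n) (hab : a ≠ b) (hac : a ≠ c) (had : a ≠ d)
    (hbc : b ≠ c) (hbd : b ≠ d) (hcd : c ≠ d) :
    Finset (Sym2 {s : Finset (Fin n) // s.card = 2}) :=
  ((univ \ {a,b}).image (fun x => s(vAB a b hab, pe a x (vAB a b hab)))) ∪
  ((univ \ {a,b}).image (fun x => s(vAB a b hab, pe b x (vAB a b hab)))) ∪
  ((univ \ {a,b,d}).image (fun x => s(vAB a d had, pe a x (vAB a b hab)))) ∪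
  ((univ \ {a,d}).image (fun x => s(vAB a d had, pe d x (vAB a b hab)))) ∪
  {s(vAB a c hac, vAB b c hbc), s(vAB a c hac, vAB c d hcd), s(vAB b c hbc, vAB b d hbd),
   s(vAB b c hbc, vAB c d hcd), s(vAB b d hbd, vAB c d hcd)}

open Finset in
lemma card_image_star {n : ℕ} (P df : {s : Finset (Fin n) // s.card = 2}) (p : Fin n)
    (T : Finset (Fin n)) (hpT : p ∈ T) (hP : ∀ y, y ∉ T → P.1 ≠ {p, y}) :
    ((univ \ T).image (fun x => s(P, pe p x df))).card = (univ \ T).card := by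
  apply card_image_of_injOn
  intro x hx y hy hxy
  simp only [coe_sdiff, coe_univ, Set.mem_diff, Set.mem_univ, true_and, mem_coe] at hx hy
  have hpx : p ≠ x := fun h => hx (h ▸ hpT)
  have hpy : p ≠ y := fun h => hy (h ▸ hpT)
  rw [Sym2.eq_iff] at hxy
  rcases hxy with ⟨-, h2⟩ | ⟨h1, -⟩
  · have := congrArg Subtype.val h2
    rw [pe_val hpx, pe_val hpy] at this
    have hxm : x ∈ ({p, y} : Finset (Fin n)) := this ▸ (by simp)
    simp only [mem_insert, mem_singleton] at hxm
    rcases hxm with h | h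
    · exact absurd h.symm hpx
    · exact h
  · exact absurd (by rw [congrArg Subtype.val h1, pe_val hpy]) (hP y hy)

open Finset in
lemma ES_card {n : ℕ} (hn : 5 ≤ n) (a b c d : Fin n) (hab : a ≠ b) (hac : a ≠ c) (had : a ≠ d)
    (hbc : b ≠ c) (hbd : b ≠ d) (hcd : c ≠ d) :
    (ES a b c d hab hac had hbc hbd hcd).card = 4 * n - 4 := by
  classical
  have cuniv : (univ : Finset (Fin n)).card = n := by simp
  have cab : ({a,b} : Finset (Fin n)).card = 2 := card_pair hab
  have cad : ({a,d} : Finset (Fin n)).card = 2 := card_pair had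
  have cabd : ({a,b,d} : Finset (Fin n)).card = 3 := by
    rw [card_insert_of_notMem (by simp [hab, had]), card_pair hbd]
  -- vertex inequality facts
  have q1 : ({a,b} : Finset (Fin n)) ≠ {a,c} := pair_ne_r hab.symm hbc
  have q2 : ({a,b} : Finset (Fin n)) ≠ {b,c} := pair_ne_l hab hac
  have q3 : ({a,b} : Finset (Fin n)) ≠ {b,d} := pair_ne_l hab had
  have q4 : ({a,b} : Finset (Fin n)) ≠ {c,d} := pair_ne_l hac had
  have q5 : ({a,d} : Finset (Fin n)) ≠ {a,c} := pair_ne_r had.symm hcd.symm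
  have q6 : ({a,d} : Finset (Fin n)) ≠ {b,c} := pair_ne_l hab hac
  have q7 : ({a,d} : Finset (Fin n)) ≠ {b,d} := pair_ne_l hab had
  have q8 : ({a,d} : Finset (Fin n)) ≠ {c,d} := pair_ne_l hac had
  have q9 : ({a,b} : Finset (Fin n)) ≠ {a,d} := pair_ne_r hab.symm hbd
  have v1 : vAB a c hac ≠ vAB b c hbc := fun h => pair_ne_l hab hac (congrArg Subtype.val h)
  have v2 : vAB a c hac ≠ vAB b d hbd := fun h => pair_ne_l hab had (congrArg Subtype.val h)
  have v3 : vAB a c hac ≠ vAB c d hcd := fun h => pair_ne_l hac had (congrArg Subtype.val h)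
  have v4 : vAB b c hbc ≠ vAB b d hbd := fun h => pair_ne_r hbc.symm hcd (congrArg Subtype.val h)
  have v5 : vAB b c hbc ≠ vAB c d hcd := fun h => pair_ne_l hbc hbd (congrArg Subtype.val h)
  have v6 : vAB b d hbd ≠ vAB c d hcd := fun h => pair_ne_l hbc hbd (congrArg Subtype.val h)
  have x01 : vAB a b hab ≠ vAB a d had := fun h => q9 (congrArg Subtype.val h)
  -- the five pieces
  set A := ((univ \ ({a,b} : Finset (Fin n))).image
    (fun x => s(vAB a b hab, pe a x (vAB a b hab)))) with hA_def
  set B := ((univ \ ({a,b} : Finset (Fin n))).image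
    (fun x => s(vAB a b hab, pe b x (vAB a b hab)))) with hB_def
  set C := ((univ \ ({a,b,d} : Finset (Fin n))).image
    (fun x => s(vAB a d had, pe a x (vAB a b hab)))) with hC_def
  set D := ((univ \ ({a,d} : Finset (Fin n))).image
    (fun x => s(vAB a d had, pe d x (vAB a b hab)))) with hD_def
  set E : Finset (Sym2 {s : Finset (Fin n) // s.card = 2}) :=
    {s(vAB a c hac, vAB b c hbc), s(vAB a c hac, vAB c d hcd), s(vAB b c hbc, vAB b d hbd),
     s(vAB b c hbc, vAB c d hcd), s(vAB b d hbd, vAB c d hcd)} with hE_def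
  have cA : A.card = n - 2 := by
    have hP : ∀ y, y ∉ ({a,b} : Finset (Fin n)) → (vAB a b hab).1 ≠ {a, y} := by
      intro y hy h
      simp only [mem_insert, mem_singleton, not_or] at hy
      have : b ∈ ({a, y} : Finset (Fin n)) := by rw [← h]; simp [vAB]
      simp only [mem_insert, mem_singleton] at this
      rcases this with h' | h'
      · exact hab h'.symm
      · exact hy.2 h'.symm
    have := card_image_star (vAB a b hab) (vAB a b hab) a ({a,b} : Finset (Fin n))
      (by simp) hP
    rw [hA_def, this, card_sdiff_of_subset (subset_univ _), cuniv, cab]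
  have cB : B.card = n - 2 := by
    have hP : ∀ y, y ∉ ({a,b} : Finset (Fin n)) → (vAB a b hab).1 ≠ {b, y} := by
      intro y hy h
      simp only [mem_insert, mem_singleton, not_or] at hy
      have : a ∈ ({b, y} : Finset (Fin n)) := by rw [← h]; simp [vAB]
      simp only [mem_insert, mem_singleton] at this
      rcases this with h' | h'
      · exact hab h'
      · exact hy.1 h'.symm
    have := card_image_star (vAB a b hab) (vAB a b hab) b ({a,b} : Finset (Fin n))
      (by simp) hP
    rw [hB_def, this, card_sdiff_of_subset (subset_univ _), cuniv, cab]
  have cC : C.card = n - 3 := by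
    have hP : ∀ y, y ∉ ({a,b,d} : Finset (Fin n)) → (vAB a d had).1 ≠ {a, y} := by
      intro y hy h
      simp only [mem_insert, mem_singleton, not_or] at hy
      have : d ∈ ({a, y} : Finset (Fin n)) := by rw [← h]; simp [vAB]
      simp only [mem_insert, mem_singleton] at this
      rcases this with h' | h'
      · exact had h'.symm
      · exact hy.2.2 h'.symm
    have := card_image_star (vAB a d had) (vAB a b hab) a ({a,b,d} : Finset (Fin n))
      (by simp) hP
    rw [hC_def, this, card_sdiff_of_subset (subset_univ _), cuniv, cabd]
  have cD : D.card = n - 2 := by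
    have hP : ∀ y, y ∉ ({a,d} : Finset (Fin n)) → (vAB a d had).1 ≠ {d, y} := by
      intro y hy h
      simp only [mem_insert, mem_singleton, not_or] at hy
      have : a ∈ ({d, y} : Finset (Fin n)) := by rw [← h]; simp [vAB]
      simp only [mem_insert, mem_singleton] at this
      rcases this with h' | h'
      · exact had h'
      · exact hy.1 h'.symm
    have := card_image_star (vAB a d had) (vAB a b hab) d ({a,d} : Finset (Fin n))
      (by simp) hP
    rw [hD_def, this, card_sdiff_of_subset (subset_univ _), cuniv, cad]
  have cE : E.card = 5 := by
    rw [hE_def]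
    rw [card_insert_of_notMem (by
      simp [Sym2.eq_iff, v1, v2, v3, v4, v5, v6, v1.symm, v2.symm, v3.symm, v4.symm,
        v5.symm, v6.symm])]
    rw [card_insert_of_notMem (by
      simp [Sym2.eq_iff, v1, v2, v3, v4, v5, v6, v1.symm, v2.symm, v3.symm, v4.symm,
        v5.symm, v6.symm])]
    rw [card_insert_of_notMem (by
      simp [Sym2.eq_iff, v1, v2, v3, v4, v5, v6, v1.symm, v2.symm, v3.symm, v4.symm,
        v5.symm, v6.symm])]
    rw [card_insert_of_notMem (by
      simp [Sym2.eq_iff, v1, v2, v3, v4, v5, v6, v1.symm, v2.symm, v3.symm, v4.symm,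
        v5.symm, v6.symm])]
    rfl
  have dAB : Disjoint A B := by
    rw [Finset.disjoint_left]
    rintro e heA heB
    rw [hA_def, mem_image] at heA
    rw [hB_def, mem_image] at heB
    obtain ⟨x, hx, rfl⟩ := heA
    obtain ⟨y, hy, heq⟩ := heB
    simp only [mem_sdiff, mem_univ, true_and, mem_insert, mem_singleton, not_or] at hx hy
    rw [Sym2.eq_iff] at heq
    rcases heq with ⟨-, h2⟩ | ⟨h1, -⟩
    · have hv := congrArg Subtype.val h2
      rw [pe_val (fun h => hy.2 h.symm), pe_val (fun h => hx.1 h.symm)] at hv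
      have ha : a ∈ ({b, y} : Finset (Fin n)) := by rw [hv]; simp
      simp only [mem_insert, mem_singleton] at ha
      rcases ha with h | h
      · exact hab h
      · exact hy.1 h.symm
    · have hv := congrArg Subtype.val h1
      rw [pe_val (fun h => hx.1 h.symm)] at hv
      have hb : b ∈ ({a, x} : Finset (Fin n)) := by rw [← hv]; simp [vAB]
      simp only [mem_insert, mem_singleton] at hb
      rcases hb with h | h
      · exact hab h.symm
      · exact hx.2 h.symm
  have dC : Disjoint (A ∪ B) C := by
    rw [Finset.disjoint_left]
    rintro e he heC
    rw [hC_def, mem_image] at heC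
    obtain ⟨z, hz, heq⟩ := heC
    simp only [mem_sdiff, mem_univ, true_and, mem_insert, mem_singleton, not_or] at hz
    have hX01 : vAB a d had ≠ vAB a b hab := fun h => q9 (congrArg Subtype.val h).symm
    have hpe : pe a z (vAB a b hab) = vAB a b hab → False := by
      intro h
      have hv := congrArg Subtype.val h
      rw [pe_val (fun h' => hz.1 h'.symm)] at hv
      have hb : b ∈ ({a, z} : Finset (Fin n)) := by rw [hv]; simp [vAB]
      simp only [mem_insert, mem_singleton] at hb
      rcases hb with h' | h'
      · exact hab h'.symm
      · exact hz.2.1 h'.symm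
    rcases mem_union.mp he with heA | heB
    · rw [hA_def, mem_image] at heA
      obtain ⟨x, hx, hex⟩ := heA
      rw [← hex] at heq
      rw [Sym2.eq_iff] at heq
      rcases heq with ⟨h1, -⟩ | ⟨-, h2⟩
      · exact hX01 h1
      · exact hpe h2
    · rw [hB_def, mem_image] at heB
      obtain ⟨y, hy, hey⟩ := heB
      rw [← hey] at heq
      rw [Sym2.eq_iff] at heq
      rcases heq with ⟨h1, -⟩ | ⟨-, h2⟩
      · exact hX01 h1
      · exact hpe h2
  have dD : Disjoint ((A ∪ B) ∪ C) D := by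
    rw [Finset.disjoint_left]
    rintro e he heD
    rw [hD_def, mem_image] at heD
    obtain ⟨w, hw, heq⟩ := heD
    simp only [mem_sdiff, mem_univ, true_and, mem_insert, mem_singleton, not_or] at hw
    have hX01 : vAB a d had ≠ vAB a b hab := fun h => q9 (congrArg Subtype.val h).symm
    have hdw : ∀ P : {s : Finset (Fin n) // s.card = 2}, P.1 = {a, b} ∨ P.1 = {a, d} ∨
        (∃ z, z ≠ a ∧ P.1 = {a, z}) → pe d w (vAB a b hab) = P → False := by
      intro P hP h
      have hv := congrArg Subtype.val h
      rw [pe_val (fun h' => hw.2 h'.symm)] at hv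
      have haw : a ∈ ({d, w} : Finset (Fin n)) := by
        rcases hP with h' | h' | ⟨z, hz, h'⟩ <;> rw [hv, h'] <;> simp
      simp only [mem_insert, mem_singleton] at haw
      rcases haw with h' | h'
      · exact had h'
      · exact hw.1 h'.symm
    rcases mem_union.mp he with he' | heC
    · rcases mem_union.mp he' with heA | heB
      · rw [hA_def, mem_image] at heA
        obtain ⟨x, hx, hex⟩ := heA
        rw [← hex, Sym2.eq_iff] at heq
        simp only [mem_sdiff, mem_univ, true_and, mem_insert, mem_singleton, not_or] at hx
        rcases heq with ⟨h1, -⟩ | ⟨-, h2⟩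
        · exact hX01 h1
        · exact hdw _ (Or.inl rfl) h2
      · rw [hB_def, mem_image] at heB
        obtain ⟨y, hy, hey⟩ := heB
        rw [← hey, Sym2.eq_iff] at heq
        rcases heq with ⟨h1, -⟩ | ⟨-, h2⟩
        · exact hX01 h1
        · exact hdw _ (Or.inl rfl) h2
    · rw [hC_def, mem_image] at heC
      obtain ⟨z, hz, hez⟩ := heC
      simp only [mem_sdiff, mem_univ, true_and, mem_insert, mem_singleton, not_or] at hz
      rw [← hez, Sym2.eq_iff] at heq
      rcases heq with ⟨-, h2⟩ | ⟨-, h2⟩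
      · refine hdw _ (Or.inr (Or.inr ⟨z, hz.1, ?_⟩)) h2
        exact pe_val (fun h' => hz.1 h'.symm) _
      · exact hdw _ (Or.inr (Or.inl rfl)) h2
  have dE : Disjoint (((A ∪ B) ∪ C) ∪ D) E := by
    rw [Finset.disjoint_left]
    rintro e he heE
    rw [hE_def] at heE
    simp only [mem_insert, mem_singleton] at heE
    have hshape : (∃ w, e = s(vAB a b hab, w)) ∨ (∃ w, e = s(vAB a d had, w)) := by
      rcases mem_union.mp he with he' | heD
      · rcases mem_union.mp he' with he'' | heC
        · rcases mem_union.mp he'' with heA | heB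
          · rw [hA_def, mem_image] at heA
            obtain ⟨x, -, hex⟩ := heA
            exact Or.inl ⟨_, hex.symm⟩
          · rw [hB_def, mem_image] at heB
            obtain ⟨x, -, hex⟩ := heB
            exact Or.inl ⟨_, hex.symm⟩
        · rw [hC_def, mem_image] at heC
          obtain ⟨x, -, hex⟩ := heC
          exact Or.inr ⟨_, hex.symm⟩
      · rw [hD_def, mem_image] at heD
        obtain ⟨x, -, hex⟩ := heD
        exact Or.inr ⟨_, hex.symm⟩
    rcases hshape with ⟨w, rfl⟩ | ⟨w, rfl⟩ <;>
      rcases heE with h|h|h|h|h <;>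
      rcases Sym2.eq_iff.mp h with ⟨hh, -⟩ | ⟨hh, -⟩ <;>
      first
        | exact q1 (congrArg Subtype.val hh)
        | exact q2 (congrArg Subtype.val hh)
        | exact q3 (congrArg Subtype.val hh)
        | exact q4 (congrArg Subtype.val hh)
        | exact q5 (congrArg Subtype.val hh)
        | exact q6 (congrArg Subtype.val hh)
        | exact q7 (congrArg Subtype.val hh)
        | exact q8 (congrArg Subtype.val hh)
  have hES : ES a b c d hab hac had hbc hbd hcd = (((A ∪ B) ∪ C) ∪ D) ∪ E := rfl
  rw [hES, card_union_of_disjoint dE, card_union_of_disjoint dD, card_union_of_disjoint dC,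
    card_union_of_disjoint dAB, cA, cB, cC, cD, cE]
  omega

open Finset in
lemma ES_eq {n : ℕ} (a b c d : Fin n) (hab : a ≠ b) (hac : a ≠ c) (had : a ≠ d)
    (hbc : b ≠ c) (hbd : b ≠ d) (hcd : c ≠ d) :
    (Dstar a b ⊔ Dstar a d ⊔ KU {a, b, c, d}).edgeSet =
      ↑(ES a b c d hab hac had hbc hbd hcd) := by
  have hUab : ({a,b} : Finset (Fin n)) ⊆ {a,b,c,d} := by intro x hx; simp at hx ⊢; tauto
  have hUad : ({a,d} : Finset (Fin n)) ⊆ {a,b,c,d} := by intro x hx; simp at hx ⊢; tauto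
  have hUac : ({a,c} : Finset (Fin n)) ⊆ {a,b,c,d} := by intro x hx; simp at hx ⊢; tauto
  have hUbd : ({b,d} : Finset (Fin n)) ⊆ {a,b,c,d} := by intro x hx; simp at hx ⊢; tauto
  have hUbc : ({b,c} : Finset (Fin n)) ⊆ {a,b,c,d} := by intro x hx; simp at hx ⊢; tauto
  have hUcd : ({c,d} : Finset (Fin n)) ⊆ {a,b,c,d} := by intro x hx; simp at hx ⊢; tauto
  have hmX0 : ∀ w, w ≠ vAB a b hab → ¬ Disjoint ({a,b} : Finset (Fin n)) w.1 →
      s(vAB a b hab, w) ∈ ES a b c d hab hac had hbc hbd hcd := by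
    intro w hw hnd
    simp only [ES]
    obtain ⟨x, hx1, hx2⟩ := not_disjoint_iff.mp hnd
    simp only [mem_insert, mem_singleton] at hx1
    rcases hx1 with h | h
    · obtain ⟨y, hy, hwv⟩ := exists_other w (h ▸ hx2)
      have hyb : y ≠ b := fun hh => hw (Subtype.ext (by rw [hwv, hh]; rfl))
      refine mem_union_left _ (mem_union_left _ (mem_union_left _ (mem_union_left _ ?_)))
      rw [mem_image]
      refine ⟨y, ?_, ?_⟩
      · simp only [mem_sdiff, mem_univ, true_and, mem_insert, mem_singleton, not_or]
        exact ⟨hy, hyb⟩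
      · exact Sym2.congr_right.mpr
          (Subtype.ext ((pe_val (fun hh => hy hh.symm) _).trans hwv.symm))
    · obtain ⟨y, hy, hwv⟩ := exists_other w (h ▸ hx2)
      have hya : y ≠ a := fun hh => hw (Subtype.ext (by rw [hwv, hh, pair_comm]; rfl))
      refine mem_union_left _ (mem_union_left _ (mem_union_left _ (mem_union_right _ ?_)))
      rw [mem_image]
      refine ⟨y, ?_, ?_⟩
      · simp only [mem_sdiff, mem_univ, true_and, mem_insert, mem_singleton, not_or]
        exact ⟨hya, hy⟩
      · exact Sym2.congr_right.mpr
          (Subtype.ext ((pe_val (fun hh => hy hh.symm) _).trans hwv.symm))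
  have hmX1 : ∀ w, w ≠ vAB a d had → ¬ Disjoint ({a,d} : Finset (Fin n)) w.1 →
      s(vAB a d had, w) ∈ ES a b c d hab hac had hbc hbd hcd := by
    intro w hw hnd
    obtain ⟨x, hx1, hx2⟩ := not_disjoint_iff.mp hnd
    simp only [mem_insert, mem_singleton] at hx1
    rcases hx1 with h | h
    · obtain ⟨y, hy, hwv⟩ := exists_other w (h ▸ hx2)
      by_cases hyb : y = b
      · have hw0 : w = vAB a b hab := Subtype.ext (by rw [hwv, hyb]; rfl)
        rw [hw0, Sym2.eq_swap]
        simp only [ES]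
        refine mem_union_left _ (mem_union_left _ (mem_union_left _ (mem_union_left _ ?_)))
        rw [mem_image]
        refine ⟨d, ?_, ?_⟩
        · simp only [mem_sdiff, mem_univ, true_and, mem_insert, mem_singleton, not_or]
          exact ⟨fun hh => had hh.symm, fun hh => hbd hh.symm⟩
        · exact Sym2.congr_right.mpr (Subtype.ext (pe_val had _))
      · have hyd : y ≠ d := fun hh => hw (Subtype.ext (by rw [hwv, hh]; rfl))
        simp only [ES]
        refine mem_union_left _ (mem_union_left _ (mem_union_right _ ?_))
        rw [mem_image]
        refine ⟨y, ?_, ?_⟩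
        · simp only [mem_sdiff, mem_univ, true_and, mem_insert, mem_singleton, not_or]
          exact ⟨hy, hyb, hyd⟩
        · exact Sym2.congr_right.mpr
            (Subtype.ext ((pe_val (fun hh => hy hh.symm) _).trans hwv.symm))
    · obtain ⟨y, hy, hwv⟩ := exists_other w (h ▸ hx2)
      have hya : y ≠ a := fun hh => hw (Subtype.ext (by rw [hwv, hh, pair_comm]; rfl))
      simp only [ES]
      refine mem_union_left _ (mem_union_right _ ?_)
      rw [mem_image]
      refine ⟨y, ?_, ?_⟩
      · simp only [mem_sdiff, mem_univ, true_and, mem_insert, mem_singleton, not_or]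
        exact ⟨hya, hy⟩
      · exact Sym2.congr_right.mpr
          (Subtype.ext ((pe_val (fun hh => hy hh.symm) _).trans hwv.symm))
  ext e
  refine Sym2.ind (fun u v => ?_) e
  rw [SimpleGraph.mem_edgeSet, Finset.mem_coe]
  constructor
  · intro hadj
    rw [adj_char a b c d] at hadj
    obtain ⟨huv, hnd, hor⟩ := hadj
    have hndba : ¬ Disjoint v.1 u.1 := fun h => hnd h.symm
    rcases hor with h | h | h | h | ⟨hsU, hsV⟩
    · have hu0 : u = vAB a b hab := Subtype.ext h
      rw [hu0]
      exact hmX0 v (fun hh => huv (hu0.trans hh.symm)) (by rw [← h]; exact hnd)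
    · have hv0 : v = vAB a b hab := Subtype.ext h
      rw [hv0, Sym2.eq_swap]
      exact hmX0 u (fun hh => huv (hh.trans hv0.symm)) (by rw [← h]; exact hndba)
    · have hu0 : u = vAB a d had := Subtype.ext h
      rw [hu0]
      exact hmX1 v (fun hh => huv (hu0.trans hh.symm)) (by rw [← h]; exact hnd)
    · have hv0 : v = vAB a d had := Subtype.ext h
      rw [hv0, Sym2.eq_swap]
      exact hmX1 u (fun hh => huv (hh.trans hv0.symm)) (by rw [← h]; exact hndba)
    · have hu6 : u.1 = {a,b} ∨ u.1 = {a,d} ∨ u.1 = {a,c} ∨ u.1 = {b,c} ∨ u.1 = {b,d} ∨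
          u.1 = {c,d} := by
        rcases two_of_four a b c d u hsU with ⟨h1,h2⟩|⟨h1,h2⟩|⟨h1,h2⟩|⟨h1,h2⟩|⟨h1,h2⟩|⟨h1,h2⟩
        · exact Or.inl (pair_eq u h1 h2 hab)
        · exact Or.inr (Or.inr (Or.inl (pair_eq u h1 h2 hac)))
        · exact Or.inr (Or.inl (pair_eq u h1 h2 had))
        · exact Or.inr (Or.inr (Or.inr (Or.inl (pair_eq u h1 h2 hbc))))
        · exact Or.inr (Or.inr (Or.inr (Or.inr (Or.inl (pair_eq u h1 h2 hbd)))))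
        · exact Or.inr (Or.inr (Or.inr (Or.inr (Or.inr (pair_eq u h1 h2 hcd)))))
      have hv6 : v.1 = {a,b} ∨ v.1 = {a,d} ∨ v.1 = {a,c} ∨ v.1 = {b,c} ∨ v.1 = {b,d} ∨
          v.1 = {c,d} := by
        rcases two_of_four a b c d v hsV with ⟨h1,h2⟩|⟨h1,h2⟩|⟨h1,h2⟩|⟨h1,h2⟩|⟨h1,h2⟩|⟨h1,h2⟩
        · exact Or.inl (pair_eq v h1 h2 hab)
        · exact Or.inr (Or.inr (Or.inl (pair_eq v h1 h2 hac)))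
        · exact Or.inr (Or.inl (pair_eq v h1 h2 had))
        · exact Or.inr (Or.inr (Or.inr (Or.inl (pair_eq v h1 h2 hbc))))
        · exact Or.inr (Or.inr (Or.inr (Or.inr (Or.inl (pair_eq v h1 h2 hbd)))))
        · exact Or.inr (Or.inr (Or.inr (Or.inr (Or.inr (pair_eq v h1 h2 hcd)))))
      rcases hu6 with hu4|hu4|hu4|hu4|hu4|hu4 <;> rcases hv6 with hv4|hv4|hv4|hv4|hv4|hv4 <;>
        first
          | exact absurd (Subtype.ext (hu4.trans hv4.symm)) huv
          | (have hu0 : u = vAB a b hab := Subtype.ext hu4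
             rw [hu0]
             exact hmX0 v (fun hh => huv (hu0.trans hh.symm)) (by rw [← hu4]; exact hnd))
          | (have hv0 : v = vAB a b hab := Subtype.ext hv4
             rw [hv0, Sym2.eq_swap]
             exact hmX0 u (fun hh => huv (hh.trans hv0.symm)) (by rw [← hv4]; exact hndba))
          | (have hu0 : u = vAB a d had := Subtype.ext hu4
             rw [hu0]
             exact hmX1 v (fun hh => huv (hu0.trans hh.symm)) (by rw [← hu4]; exact hnd))
          | (have hv0 : v = vAB a d had := Subtype.ext hv4
             rw [hv0, Sym2.eq_swap]
             exact hmX1 u (fun hh => huv (hh.trans hv0.symm)) (by rw [← hv4]; exact hndba))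
          | (exfalso
             obtain ⟨x, hx1, hx2⟩ := not_disjoint_iff.mp hnd
             rw [hu4] at hx1
             rw [hv4] at hx2
             simp only [mem_insert, mem_singleton] at hx1 hx2
             rcases hx1 with h1x | h1x <;> rcases hx2 with h2x | h2x <;>
               first
                 | exact hab (h1x.symm.trans h2x)
                 | exact hab (h2x.symm.trans h1x)
                 | exact hac (h1x.symm.trans h2x)
                 | exact hac (h2x.symm.trans h1x)
                 | exact had (h1x.symm.trans h2x)
                 | exact had (h2x.symm.trans h1x)
                 | exact hbc (h1x.symm.trans h2x)
                 | exact hbc (h2x.symm.trans h1x)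
                 | exact hbd (h1x.symm.trans h2x)
                 | exact hbd (h2x.symm.trans h1x)
                 | exact hcd (h1x.symm.trans h2x)
                 | exact hcd (h2x.symm.trans h1x))
          | (simp only [ES]
             apply mem_union_right
             simp [Sym2.eq_iff, Subtype.ext_iff, vAB, hu4, hv4])
  · intro hmem
    simp only [ES] at hmem
    rcases mem_union.mp hmem with hO | hE
    · rcases mem_union.mp hO with hP | hD
      · rcases mem_union.mp hP with hQ | hC
        · rcases mem_union.mp hQ with hA | hB
          · obtain ⟨x, hx, hex⟩ := mem_image.mp hA
            simp only [mem_sdiff, mem_univ, true_and, mem_insert, mem_singleton,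
              not_or] at hx
            have hxa : a ≠ x := fun h => hx.1 h.symm
            rw [← SimpleGraph.mem_edgeSet, ← hex, SimpleGraph.mem_edgeSet, adj_char a b c d]
            refine ⟨?_, ?_, Or.inl rfl⟩
            · intro h
              exact pair_ne_r hab.symm (fun hh => hx.2 hh.symm)
                ((congrArg Subtype.val h).trans (pe_val hxa _))
            · exact not_disjoint_iff.2 ⟨a, Finset.mem_insert_self _ _,
                by rw [pe_val hxa]; exact Finset.mem_insert_self _ _⟩
          · obtain ⟨x, hx, hex⟩ := mem_image.mp hB
            simp only [mem_sdiff, mem_univ, true_and, mem_insert, mem_singleton,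
              not_or] at hx
            have hxb : b ≠ x := fun h => hx.2 h.symm
            rw [← SimpleGraph.mem_edgeSet, ← hex, SimpleGraph.mem_edgeSet, adj_char a b c d]
            refine ⟨?_, ?_, Or.inl rfl⟩
            · intro h
              exact pair_ne_l hab (fun hh => hx.1 hh.symm)
                ((congrArg Subtype.val h).trans (pe_val hxb _))
            · exact not_disjoint_iff.2 ⟨b,
                Finset.mem_insert_of_mem (Finset.mem_singleton_self _),
                by rw [pe_val hxb]; exact Finset.mem_insert_self _ _⟩
        · obtain ⟨x, hx, hex⟩ := mem_image.mp hC
          simp only [mem_sdiff, mem_univ, true_and, mem_insert, mem_singleton,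
            not_or] at hx
          have hxa : a ≠ x := fun h => hx.1 h.symm
          rw [← SimpleGraph.mem_edgeSet, ← hex, SimpleGraph.mem_edgeSet, adj_char a b c d]
          refine ⟨?_, ?_, Or.inr (Or.inr (Or.inl rfl))⟩
          · intro h
            exact pair_ne_r had.symm (fun hh => hx.2.2 hh.symm)
              ((congrArg Subtype.val h).trans (pe_val hxa _))
          · exact not_disjoint_iff.2 ⟨a, Finset.mem_insert_self _ _,
              by rw [pe_val hxa]; exact Finset.mem_insert_self _ _⟩
      · obtain ⟨x, hx, hex⟩ := mem_image.mp hD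
        simp only [mem_sdiff, mem_univ, true_and, mem_insert, mem_singleton,
          not_or] at hx
        have hxd : d ≠ x := fun h => hx.2 h.symm
        rw [← SimpleGraph.mem_edgeSet, ← hex, SimpleGraph.mem_edgeSet, adj_char a b c d]
        refine ⟨?_, ?_, Or.inr (Or.inr (Or.inl rfl))⟩
        · intro h
          exact pair_ne_l had (fun hh => hx.1 hh.symm)
            ((congrArg Subtype.val h).trans (pe_val hxd _))
        · exact not_disjoint_iff.2 ⟨d,
            Finset.mem_insert_of_mem (Finset.mem_singleton_self _),
            by rw [pe_val hxd]; exact Finset.mem_insert_self _ _⟩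
    · have v1 : vAB a c hac ≠ vAB b c hbc :=
        fun h => pair_ne_l hab hac (congrArg Subtype.val h)
      have v3 : vAB a c hac ≠ vAB c d hcd :=
        fun h => pair_ne_l hac had (congrArg Subtype.val h)
      have v4 : vAB b c hbc ≠ vAB b d hbd :=
        fun h => pair_ne_r hbc.symm hcd (congrArg Subtype.val h)
      have v5 : vAB b c hbc ≠ vAB c d hcd :=
        fun h => pair_ne_l hbc hbd (congrArg Subtype.val h)
      have v6 : vAB b d hbd ≠ vAB c d hcd :=
        fun h => pair_ne_l hbc hbd (congrArg Subtype.val h)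
      simp only [mem_insert, mem_singleton] at hE
      have memc1 : c ∈ ({a,c} : Finset (Fin n)) :=
        Finset.mem_insert_of_mem (Finset.mem_singleton_self _)
      have memc2 : c ∈ ({b,c} : Finset (Fin n)) :=
        Finset.mem_insert_of_mem (Finset.mem_singleton_self _)
      have memc3 : c ∈ ({c,d} : Finset (Fin n)) := Finset.mem_insert_self _ _
      have memb1 : b ∈ ({b,c} : Finset (Fin n)) := Finset.mem_insert_self _ _
      have memb2 : b ∈ ({b,d} : Finset (Fin n)) := Finset.mem_insert_self _ _
      have memd1 : d ∈ ({b,d} : Finset (Fin n)) :=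
        Finset.mem_insert_of_mem (Finset.mem_singleton_self _)
      have memd2 : d ∈ ({c,d} : Finset (Fin n)) :=
        Finset.mem_insert_of_mem (Finset.mem_singleton_self _)
      rcases hE with h | h | h | h | h <;>
        rw [← SimpleGraph.mem_edgeSet, h, SimpleGraph.mem_edgeSet, adj_char a b c d]
      · exact ⟨v1, not_disjoint_iff.2 ⟨c, memc1, memc2⟩,
          Or.inr (Or.inr (Or.inr (Or.inr ⟨hUac, hUbc⟩)))⟩
      · exact ⟨v3, not_disjoint_iff.2 ⟨c, memc1, memc3⟩,
          Or.inr (Or.inr (Or.inr (Or.inr ⟨hUac, hUcd⟩)))⟩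
      · exact ⟨v4, not_disjoint_iff.2 ⟨b, memb1, memb2⟩,
          Or.inr (Or.inr (Or.inr (Or.inr ⟨hUbc, hUbd⟩)))⟩
      · exact ⟨v5, not_disjoint_iff.2 ⟨c, memc2, memc3⟩,
          Or.inr (Or.inr (Or.inr (Or.inr ⟨hUbc, hUcd⟩)))⟩
      · exact ⟨v6, not_disjoint_iff.2 ⟨d, memd1, memd2⟩,
          Or.inr (Or.inr (Or.inr (Or.inr ⟨hUbd, hUcd⟩)))⟩

/-- The subgraph of `L(K_n)` with edge set `E_{a,b,c,d}` is an interval-order graph with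
`4(n-1)` edges. -/
theorem type_b_interval_order (n : ℕ) (hn : 5 ≤ n) (a b c d : Fin n)
    (hdist : ([a, b, c, d] : List (Fin n)).Nodup) :
    IsIntervalGraph (Dstar a b ⊔ Dstar a d ⊔ KU {a, b, c, d})ᶜ ∧
    (Dstar a b ⊔ Dstar a d ⊔ KU {a, b, c, d}).edgeSet.ncard = 4 * (n - 1) := by
  simp only [List.nodup_cons, List.mem_cons, List.mem_singleton, List.not_mem_nil,
    or_false, List.nodup_nil, and_true, not_or] at hdist
  obtain ⟨⟨hab, hac, had⟩, ⟨hbc, hbd⟩, hcd, -⟩ := hdist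
  constructor
  · refine ⟨loF a b c d, hiF a b c d, ?_, ?_⟩
    · intro v
      rcases spec hab hac had hbc hbd hcd v with
        ⟨-,-,hl,hh⟩|⟨-,-,hl,hh⟩|⟨-,-,-,-,hl,hh⟩|⟨-,-,-,-,hl,hh⟩|⟨-,-,-,-,hl,hh⟩|
        ⟨-,-,-,-,hl,hh⟩|⟨-,-,-,-,-,-,-,hl,hh⟩|⟨-,-,-,-,-,-,-,hl,hh⟩|⟨-,-,-,-,-,-,-,hl,hh⟩|
        ⟨-,-,-,-,-,-,hl,hh⟩ <;> rw [hl, hh] <;> norm_num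
    · intro u v huv
      rw [SimpleGraph.compl_adj, Set.Icc_inter_Icc, Set.nonempty_Icc, adj_char a b c d]
      have h := adj_iff_num hab hac had hbc hbd hcd u v huv
      constructor
      · rintro ⟨-, hno⟩
        by_contra hc
        obtain ⟨h1, h2⟩ := h.mpr hc
        exact hno ⟨huv, h1, h2⟩
      · intro hle
        exact ⟨huv, fun hadj => (h.mp ⟨hadj.2.1, hadj.2.2⟩) hle⟩
  · rw [ES_eq a b c d hab hac had hbc hbd hcd, Set.ncard_coe_finset,
      ES_card hn a b c d hab hac had hbc hbd hcd]
    omega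
end
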